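/- arXiv:2306.08242 — 14 statements merged into one kernel-verified Lean document; each statement's English description precedes it below -/
import Mathlib

section
/- The vector g = (1/√2)·√(1−h/r)·e₀ − (1/√2)·√(1+h/r)·e₃ is a unit vector in ℂ⁴ and satisfies H·g = 0, where H is the minimal QET Hamiltonian; in particular ⟨g|H|g⟩ = 0. -/
open Matrix Kronecker
open scoped ComplexOrder

noncomputable section

abbrev M2 : Type := Matrix (Fin 2) (Fin 2) ℂ
abbrev M4 : Type := Matrix (Fin 2 × Fin 2) (Fin 2 × Fin 2) ℂ

/-- Pauli X matrix. -/
def σx : M2 := !![0, 1; 1, 0]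
/-- Pauli Y matrix. -/
def σy : M2 := !![0, -Complex.I; Complex.I, 0]
/-- Pauli Z matrix. -/
def σz : M2 := !![1, 0; 0, -1]

def X1 : M4 := σx ⊗ₖ (1 : M2)
def Z1 : M4 := σz ⊗ₖ (1 : M2)
def Z2 : M4 := (1 : M2) ⊗ₖ σz
def Y2 : M4 := (1 : M2) ⊗ₖ σy
def XX : M4 := σx ⊗ₖ σx

def H1m (k h : ℝ) : M4 := (h : ℂ) • Z1 + ((h ^ 2 / Real.sqrt (h ^ 2 + k ^ 2) : ℝ) : ℂ) • (1 : M4)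
def H2m (k h : ℝ) : M4 := (h : ℂ) • Z2 + ((h ^ 2 / Real.sqrt (h ^ 2 + k ^ 2) : ℝ) : ℂ) • (1 : M4)
def Vm (k h : ℝ) : M4 :=
  ((2 * k : ℝ) : ℂ) • XX + ((2 * k ^ 2 / Real.sqrt (h ^ 2 + k ^ 2) : ℝ) : ℂ) • (1 : M4)
def Hm (k h : ℝ) : M4 := H1m k h + H2m k h + Vm k h

def e00 : (Fin 2 × Fin 2) → ℂ := fun p => if p = (0, 0) then 1 else 0
def e11 : (Fin 2 × Fin 2) → ℂ := fun p => if p = (1, 1) then 1 else 0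

/-- the ground state of the minimal QET Hamiltonian -/
def gs (k h : ℝ) : (Fin 2 × Fin 2) → ℂ := fun p =>
  ((1 / Real.sqrt 2 * Real.sqrt (1 - h / Real.sqrt (h ^ 2 + k ^ 2)) : ℝ) : ℂ) * e00 p
  - ((1 / Real.sqrt 2 * Real.sqrt (1 + h / Real.sqrt (h ^ 2 + k ^ 2)) : ℝ) : ℂ) * e11 p

/-- the rank-one operator |g⟩⟨g| -/
def gProj (k h : ℝ) : M4 := Matrix.vecMulVec (gs k h) (star (gs k h))

/-- Alice's projective measurement operator -/
def PA (μ : ℝ) : M4 := (2 : ℂ)⁻¹ • ((1 : M4) + (μ : ℂ) • X1)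

/-- Bob's conditional unitary -/
def UB (ν θ : ℝ) : M4 :=
  ((Real.cos θ : ℝ) : ℂ) • (1 : M4) - ((Complex.I * ν * Real.sin θ) : ℂ) • Y2

/-- the post-protocol state -/
def ρQET (k h θ : ℝ) : M4 :=
  UB (-1) θ * PA (-1) * gProj k h * PA (-1) * (UB (-1) θ)ᴴ
  + UB 1 θ * PA 1 * gProj k h * PA 1 * (UB 1 θ)ᴴ

/-- the normalized post-measurement state with prover outcome μ and verifier operation UB ν θ -/
def ρMN (k h μ ν θ : ℝ) : M4 := (2 : ℂ) • (UB ν θ * PA μ * gProj k h * PA μ * (UB ν θ)ᴴ)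

/-- `g` is a unit vector and `H · g = 0`; in particular `⟨g|H|g⟩ = 0`. -/
theorem qet_ground_state_annihilated (k h : ℝ) (hk : 0 < k) (hh : 0 < h) :
    star (gs k h) ⬝ᵥ gs k h = 1 ∧
    (Hm k h).mulVec (gs k h) = 0 ∧
    star (gs k h) ⬝ᵥ (Hm k h).mulVec (gs k h) = 0 := by
  set r := Real.sqrt (h ^ 2 + k ^ 2) with hrdef
  have hr0 : 0 < r := Real.sqrt_pos.2 (by positivity)
  have hr2 : r ^ 2 = h ^ 2 + k ^ 2 := Real.sq_sqrt (by positivity)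
  have hhr : h < r := by nlinarith
  have hA0 : 0 ≤ 1 - h / r := by
    rw [sub_nonneg, div_le_one hr0]; linarith
  have hB0 : (0:ℝ) ≤ 1 + h / r := by positivity
  set sA := Real.sqrt (1 - h / r) with hsAdef
  set sB := Real.sqrt (1 + h / r) with hsBdef
  have hA2 : sA ^ 2 = 1 - h / r := Real.sq_sqrt hA0
  have hB2 : sB ^ 2 = 1 + h / r := Real.sq_sqrt hB0
  have hAB : sA * sB = k / r := by
    rw [hsAdef, hsBdef, ← Real.sqrt_mul hA0]
    have h1 : (1 - h/r) * (1 + h/r) = (k / r) ^ 2 := by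
      field_simp; nlinarith
    rw [h1, Real.sqrt_sq (by positivity)]
  have hs2 : Real.sqrt 2 ^ 2 = 2 := Real.sq_sqrt (by norm_num)
  have hs2pos : (0:ℝ) < Real.sqrt 2 := Real.sqrt_pos.2 (by norm_num)
  have hBr : sB ^ 2 * r = r + h := by rw [hB2]; field_simp
  have hAr : sA ^ 2 * r = r - h := by rw [hA2]; field_simp
  have key1 : sA * (h + r) = sB * k := by
    calc sA * (h + r) = sA * (sB ^ 2 * r) := by rw [hBr]; ring
    _ = (sA * sB) * sB * r := by ring
    _ = (k / r) * sB * r := by rw [hAB]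
    _ = sB * k := by field_simp
  have key2 : sB * (r - h) = sA * k := by
    calc sB * (r - h) = sB * (sA ^ 2 * r) := by rw [hAr]
    _ = (sA * sB) * sA * r := by ring
    _ = (k / r) * sA * r := by rw [hAB]
    _ = sA * k := by field_simp
  have hmain : (Hm k h).mulVec (gs k h) = 0 := by
    funext p
    have h2r : h ^ 2 / r + (h ^ 2 / r + 2 * k ^ 2 / r) = 2 * r := by
      field_simp; nlinarith
    fin_cases p <;>
      simp [Hm, H1m, H2m, Vm, Z1, Z2, XX, σx, σz, gs, e00, e11, Matrix.mulVec,
        dotProduct, Fintype.sum_prod_type, Fin.sum_univ_two, Matrix.one_apply,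
        Matrix.kroneckerMap_apply, Prod.ext_iff] <;>
      · norm_cast
        simp only [← Complex.ofReal_ofNat, ← Complex.ofReal_mul, ← Complex.ofReal_div, ← Complex.ofReal_add, ← Complex.ofReal_neg, Complex.ofReal_eq_zero]
        rw [← hrdef, ← hsAdef, ← hsBdef]
        first
        | linear_combination (Real.sqrt 2)⁻¹ * sA * h2r + 2 * (Real.sqrt 2)⁻¹ * key1
        | linear_combination -(Real.sqrt 2)⁻¹ * sB * h2r - 2 * (Real.sqrt 2)⁻¹ * key2
  refine ⟨?_, hmain, by rw [hmain]; simp⟩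
  simp only [dotProduct, Fintype.sum_prod_type, Fin.sum_univ_two, gs, e00, e11,
    Pi.star_apply]
  norm_num [← Complex.ofReal_mul, ← Complex.ofReal_sub]
  norm_cast
  rw [← hrdef, ← hsAdef, ← hsBdef]
  have ht : (Real.sqrt 2)⁻¹ * (Real.sqrt 2)⁻¹ = 2⁻¹ := by
    rw [← mul_inv, Real.mul_self_sqrt (by norm_num)]
  linear_combination (sA * sA + sB * sB) * ht + 2⁻¹ * hA2 + 2⁻¹ * hB2
end
end

section
/- The minimal QET Hamiltonian H = H₁+H₂+V is Hermitian and positive semidefinite; consequently, since H·g = 0, the vector g is a ground state of H with ground-state energy 0. -/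
open Matrix Kronecker
open scoped ComplexOrder

noncomputable section

def Cfac (k h : ℝ) : M4 := Matrix.of fun p q =>
  if p = (0,0) ∧ q = (0,0) then ((Real.sqrt (2 * Real.sqrt (h^2+k^2) + 2*h) : ℝ) : ℂ)
  else if p = (0,0) ∧ q = (1,1) then ((Real.sqrt (2 * Real.sqrt (h^2+k^2) - 2*h) : ℝ) : ℂ)
  else if p = (0,1) ∧ (q = (0,1) ∨ q = (1,0)) then ((Real.sqrt (Real.sqrt (h^2+k^2) + k) : ℝ) : ℂ)
  else if p = (1,0) ∧ q = (0,1) then ((Real.sqrt (Real.sqrt (h^2+k^2) - k) : ℝ) : ℂ)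
  else if p = (1,0) ∧ q = (1,0) then -((Real.sqrt (Real.sqrt (h^2+k^2) - k) : ℝ) : ℂ)
  else 0

set_option maxHeartbeats 2000000 in
lemma key (k h : ℝ) (hk : 0 < k) (hh : 0 < h) : Hm k h = (Cfac k h)ᴴ * Cfac k h := by
  set s := Real.sqrt (h^2+k^2) with hs
  have hs0 : 0 < s := Real.sqrt_pos.mpr (by positivity)
  have hsq : s^2 = h^2 + k^2 := Real.sq_sqrt (by positivity)
  have hsh : h ≤ s := by nlinarith [sq_nonneg (s - h)]
  have hsk : k ≤ s := by nlinarith [sq_nonneg (s - k)]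
  have h1 : Real.sqrt (2*s+2*h) * Real.sqrt (2*s+2*h) = 2*s+2*h :=
    Real.mul_self_sqrt (by linarith)
  have h2 : Real.sqrt (2*s-2*h) * Real.sqrt (2*s-2*h) = 2*s-2*h :=
    Real.mul_self_sqrt (by linarith)
  have h3 : Real.sqrt (2*s+2*h) * Real.sqrt (2*s-2*h) = 2*k := by
    rw [← Real.sqrt_mul (by linarith)]
    have : (2*s+2*h) * (2*s-2*h) = (2*k)^2 := by nlinarith
    rw [this, Real.sqrt_sq (by linarith)]
  have h4 : Real.sqrt (s+k) * Real.sqrt (s+k) = s+k := Real.mul_self_sqrt (by linarith)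
  have h5 : Real.sqrt (s-k) * Real.sqrt (s-k) = s-k := Real.mul_self_sqrt (by linarith)
  have hdiv : h^2 / s + (h^2/s + 2*k^2/s) = 2*s := by
    field_simp; nlinarith
  have f1 : Real.sqrt 2 ^ 2 = 2 := Real.sq_sqrt (by norm_num)
  have f2 : Real.sqrt (s+h) ^ 2 = s+h := Real.sq_sqrt (by linarith)
  have f3 : Real.sqrt (s-h) ^ 2 = s-h := Real.sq_sqrt (by linarith)
  have f4 : Real.sqrt 2 * Real.sqrt (s+h) * (Real.sqrt 2 * Real.sqrt (s-h)) = 2*k := by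
    rw [← Real.sqrt_mul (by norm_num), ← Real.sqrt_mul (by norm_num),
      show 2*(s+h) = 2*s+2*h by ring, show 2*(s-h) = 2*s-2*h by ring, h3]
  have e6 : Real.sqrt (s+k) ^ 2 = s+k := Real.sq_sqrt (by linarith)
  have e7 : Real.sqrt (s-k) ^ 2 = s-k := Real.sq_sqrt (by linarith)
  ext ⟨i,j⟩ ⟨l,m⟩
  fin_cases i <;> fin_cases j <;> fin_cases l <;> fin_cases m <;>
    simp [Hm, H1m, H2m, Vm, Z1, Z2, XX, Cfac, σx, σz, Matrix.mul_apply,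
      Fintype.sum_prod_type, Fin.sum_univ_two, Matrix.one_apply, Prod.ext_iff,
      Complex.conj_ofReal, ← hs, -Fin.val_eq_zero_iff] <;>
    (try norm_cast) <;> (try field_simp) <;> (try nlinarith [h1, h2, h3, h4, h5, hsq, hs0, hdiv]) <;>
    (apply Complex.ext <;> simp [← Complex.ofReal_pow, mul_pow, f1, f2, f3, e6, e7] <;> field_simp <;>
      nlinarith [hsq, hs0, f4])

/-- `H` is Hermitian and positive semidefinite; consequently, since `H·g = 0`,
`g` is a ground state of `H` with ground-state energy `0`. -/
theorem qet_hamiltonian_posSemidef_ground_state (k h : ℝ) (hk : 0 < k) (hh : 0 < h) :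
    (Hm k h).IsHermitian ∧ (Hm k h).PosSemidef ∧
    ((Hm k h).mulVec (gs k h) = 0 →
      star (gs k h) ⬝ᵥ (Hm k h).mulVec (gs k h) = 0 ∧
      ∀ v : (Fin 2 × Fin 2) → ℂ, star v ⬝ᵥ v = 1 →
        (star (gs k h) ⬝ᵥ (Hm k h).mulVec (gs k h)).re ≤ (star v ⬝ᵥ (Hm k h).mulVec v).re) := by
  have psd : (Hm k h).PosSemidef := by
    rw [key k h hk hh]
    exact Matrix.posSemidef_conjTranspose_mul_self _
  refine ⟨psd.isHermitian, psd, fun hzero => ⟨by rw [hzero]; simp, fun v _ => ?_⟩⟩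
  rw [hzero]
  simp only [dotProduct_zero, Complex.zero_re]
  have := psd.dotProduct_mulVec_nonneg v
  rw [Complex.le_def] at this
  simpa using this.1
end
end

section
/- The ground state g of the minimal QET Hamiltonian has vanishing expectation value for every local term of the Hamiltonian: ⟨g|H₁|g⟩ = ⟨g|H₂|g⟩ = ⟨g|V|g⟩ = 0, and hence ⟨g|H|g⟩ = 0. -/
open Matrix Kronecker
open scoped ComplexOrder

noncomputable section

/-- the ground state has vanishing expectation value for every local term. -/
theorem qet_local_terms_vanish (k h : ℝ) (hk : 0 < k) (hh : 0 < h) :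
    star (gs k h) ⬝ᵥ (H1m k h).mulVec (gs k h) = 0 ∧
    star (gs k h) ⬝ᵥ (H2m k h).mulVec (gs k h) = 0 ∧
    star (gs k h) ⬝ᵥ (Vm k h).mulVec (gs k h) = 0 ∧
    star (gs k h) ⬝ᵥ (Hm k h).mulVec (gs k h) = 0 := by
  have hr2 : (0:ℝ) < h ^ 2 + k ^ 2 := by positivity
  have hr : (0:ℝ) < Real.sqrt (h ^ 2 + k ^ 2) := Real.sqrt_pos.2 hr2
  have hrsq : Real.sqrt (h ^ 2 + k ^ 2) ^ 2 = h ^ 2 + k ^ 2 := Real.sq_sqrt hr2.le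
  have hle : h / Real.sqrt (h ^ 2 + k ^ 2) ≤ 1 := by
    rw [div_le_one hr]
    nlinarith [hrsq, hr, sq_nonneg (Real.sqrt (h^2+k^2) - h)]
  have ha : Real.sqrt (1 - h / Real.sqrt (h ^ 2 + k ^ 2)) ^ 2 = 1 - h / Real.sqrt (h ^ 2 + k ^ 2) :=
    Real.sq_sqrt (by linarith)
  have hb : Real.sqrt (1 + h / Real.sqrt (h ^ 2 + k ^ 2)) ^ 2 = 1 + h / Real.sqrt (h ^ 2 + k ^ 2) :=
    Real.sq_sqrt (by positivity)
  have hs : Real.sqrt 2 ^ 2 = 2 := Real.sq_sqrt (by norm_num)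
  have hs0 : Real.sqrt 2 ≠ 0 := by positivity
  have hmul : (1 - h / Real.sqrt (h ^ 2 + k ^ 2)) * (1 + h / Real.sqrt (h ^ 2 + k ^ 2))
      = (k / Real.sqrt (h ^ 2 + k ^ 2)) ^ 2 := by
    field_simp
    nlinarith [hrsq]
  have hab : Real.sqrt (1 - h / Real.sqrt (h ^ 2 + k ^ 2)) *
      Real.sqrt (1 + h / Real.sqrt (h ^ 2 + k ^ 2)) = k / Real.sqrt (h ^ 2 + k ^ 2) := by
    rw [← Real.sqrt_mul (by linarith), hmul, Real.sqrt_sq (by positivity)]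
  set r := Real.sqrt (h ^ 2 + k ^ 2) with hrdef
  set a := Real.sqrt (1 - h / r) with hadef
  set b := Real.sqrt (1 + h / r) with hbdef
  set s := Real.sqrt 2 with hsdef
  have hrne : r ≠ 0 := hr.ne'
  have ha' : a ^ 2 * r = r - h := by rw [ha]; field_simp
  have hb' : b ^ 2 * r = r + h := by rw [hb]; field_simp
  have hab' : a * b * r = k := by rw [hab]; field_simp
  clear_value r a b s
  clear ha hb hab hmul hle
  have c1 : star (gs k h) ⬝ᵥ (H1m k h).mulVec (gs k h) = 0 := by
    simp [H1m, Z1, σz, dotProduct, mulVec, gs, e00, e11, Fintype.sum_prod_type,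
      Fin.sum_univ_two, Matrix.one_apply, kroneckerMap_apply, ← hrdef, ← hsdef, ← hadef, ← hbdef]
    norm_cast
    field_simp
    have h0 : (a * ((h * r + h ^ 2) * a) + b * ((-(h * r) + h ^ 2) * b)) * r = 0 := by
      linear_combination (h * r + h ^ 2) * ha' + (h ^ 2 - h * r) * hb'
    have h1 := (mul_eq_zero.mp h0).resolve_right hrne
    linear_combination h1
  have c2 : star (gs k h) ⬝ᵥ (H2m k h).mulVec (gs k h) = 0 := by
    simp [H2m, Z2, σz, dotProduct, mulVec, gs, e00, e11, Fintype.sum_prod_type,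
      Fin.sum_univ_two, Matrix.one_apply, kroneckerMap_apply, ← hrdef, ← hsdef, ← hadef, ← hbdef]
    norm_cast
    field_simp
    have h0 : (a * ((h * r + h ^ 2) * a) + b * ((-(h * r) + h ^ 2) * b)) * r = 0 := by
      linear_combination (h * r + h ^ 2) * ha' + (h ^ 2 - h * r) * hb'
    have h1 := (mul_eq_zero.mp h0).resolve_right hrne
    linear_combination h1
  have c3 : star (gs k h) ⬝ᵥ (Vm k h).mulVec (gs k h) = 0 := by
    simp [Vm, XX, σx, dotProduct, mulVec, gs, e00, e11, Fintype.sum_prod_type,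
      Fin.sum_univ_two, Matrix.one_apply, kroneckerMap_apply, ← hrdef, ← hsdef, ← hadef, ← hbdef]
    norm_cast
    field_simp
    have h0 : (a * (2 * k ^ 2 * a * s + -(2 * k * b * (r * s))) * (s * (s * (r * s))) +
        -(b * (2 * k * a * (r * s) + -(2 * k ^ 2 * b * s)) * (s * (r * s * s)))) * r = 0 := by
      linear_combination (2 * k ^ 2 * s ^ 4 * r) * ha' + (2 * k ^ 2 * s ^ 4 * r) * hb'
        - (4 * k * s ^ 4 * r ^ 2) * hab'
    have h1 : a ^ 2 + b ^ 2 = 2 := by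
      have : (a ^ 2 + b ^ 2 - 2) * r = 0 := by linear_combination ha' + hb'
      linarith [(mul_eq_zero.mp this).resolve_right hrne]
    have key : (2 * ((a / s) * ((a / s) * k ^ 2 + -(r * k * (b / s))) +
        -((b / s) * ((a / s) * r * k + -(k ^ 2 * (b / s))))) : ℝ) = r * 0 := by
      have e : (2 * ((a / s) * ((a / s) * k ^ 2 + -(r * k * (b / s))) +
          -((b / s) * ((a / s) * r * k + -(k ^ 2 * (b / s))))) : ℝ)
          = 2 / s ^ 2 * (k ^ 2 * (a ^ 2 + b ^ 2) - 2 * k * (a * b * r)) := by ring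
      rw [e, h1, hab']; ring
    have key2 : (a / s * (a / s * k ^ 2 + -(r * k * (b / s))) +
        -(b / s * (a / s * r * k + -(k ^ 2 * (b / s)))) : ℝ) = 0 := by linarith [key]
    have key3 := congrArg Complex.ofReal key2
    simp only [Complex.ofReal_add, Complex.ofReal_mul, Complex.ofReal_neg,
      Complex.ofReal_zero] at key3
    linear_combination 2 * key3
  refine ⟨c1, c2, c3, ?_⟩
  simp [Hm, Matrix.add_mulVec, dotProduct_add, c1, c2, c3]
end
end

section
/- For all h, k > 0 the ground state g of the minimal QET Hamiltonian is entangled: there exist no vectors u, v ∈ ℂ² such that g = u ⊗ v. -/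
open Matrix Kronecker
open scoped ComplexOrder

noncomputable section

/-- the ground state is entangled: it is not a Kronecker (tensor) product
of two vectors in ℂ². -/
theorem qet_ground_state_entangled (k h : ℝ) (hk : 0 < k) (hh : 0 < h) :
    ¬ ∃ (u v : Fin 2 → ℂ), gs k h = fun p => u p.1 * v p.2 := by
  rintro ⟨u, v, hg⟩
  set r := Real.sqrt (h ^ 2 + k ^ 2) with hr
  have hr0 : 0 < r := Real.sqrt_pos.mpr (by positivity)
  have hhr : h < r := by
    have : h = Real.sqrt (h ^ 2) := by
      rw [Real.sqrt_sq hh.le]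
    rw [this, hr]
    exact Real.sqrt_lt_sqrt (by positivity) (by nlinarith)
  have h1 : 0 < 1 - h / r := by
    rw [sub_pos, div_lt_one hr0]; exact hhr
  have h2 : 0 < 1 + h / r := by positivity
  have ha : gs k h (0, 0) ≠ 0 := by
    simp only [gs, e00, e11]
    norm_num
    intro hc
    rw [← hr] at hc
    exact absurd hc (ne_of_gt (Real.sqrt_pos.mpr h1))
  have hb : gs k h (1, 1) ≠ 0 := by
    simp only [gs, e00, e11]
    norm_num
    intro hc
    rw [← hr] at hc
    exact absurd hc (ne_of_gt (Real.sqrt_pos.mpr h2))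
  have hc : gs k h (0, 1) = 0 := by
    simp [gs, e00, e11]
  have h00 := congrFun hg (0, 0)
  have h11 := congrFun hg (1, 1)
  have h01 := congrFun hg (0, 1)
  simp only at h00 h11 h01
  rw [h00] at ha
  rw [h11] at hb
  rw [h01] at hc
  rcases mul_eq_zero.mp hc with h' | h'
  · exact ha (by rw [h']; ring)
  · exact hb (by rw [h']; ring)
end
end

section
/- For every θ ∈ ℝ, the expectation value of Bob's single-qubit Hamiltonian in the post-protocol state satisfies Tr[ρ_QET(θ)·H₂] = (h/√(h²+k²))·[k·sin 2θ + h·(1 − cos 2θ)]. -/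
open Matrix Kronecker
open scoped ComplexOrder

noncomputable section

lemma trace_vecMulVec' (M : M4) (u v : (Fin 2 × Fin 2) → ℂ) :
    (M * vecMulVec u v).trace = v ⬝ᵥ (M *ᵥ u) := by
  simp [Matrix.trace, Matrix.diag, Matrix.mul_apply, Matrix.vecMulVec_apply,
    dotProduct, Matrix.mulVec, Finset.mul_sum, mul_comm, mul_left_comm]

lemma key_trace (A H : M4) (u : (Fin 2 × Fin 2) → ℂ) :
    (A * vecMulVec u (star u) * Aᴴ * H).trace
      = star (A *ᵥ u) ⬝ᵥ (H *ᵥ (A *ᵥ u)) := by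
  have h1 : A * vecMulVec u (star u) * Aᴴ * H = (A * vecMulVec u (star u)) * (Aᴴ * H) := by
    rw [mul_assoc]
  rw [h1, Matrix.trace_mul_comm, ← mul_assoc, mul_assoc _ A, ← mul_assoc,
    trace_vecMulVec', ← Matrix.mulVec_mulVec, ← Matrix.mulVec_mulVec,
    Matrix.dotProduct_mulVec (star u) Aᴴ, ← Matrix.star_mulVec]

def vec2 (m : M2) : (Fin 2 × Fin 2) → ℂ := fun p => m p.1 p.2

lemma PA_herm (μ : ℝ) : (PA μ)ᴴ = PA μ := by
  ext ⟨i, j⟩ ⟨i', j'⟩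
  fin_cases i <;> fin_cases j <;> fin_cases i' <;> fin_cases j' <;>
    simp [PA, X1, σx, Matrix.conjTranspose_apply, Matrix.add_apply, Matrix.smul_apply,
      Matrix.one_apply, kroneckerMap_apply, Prod.ext_iff]


set_option maxHeartbeats 2000000 in
/-- `Tr[ρ_QET(θ)·H₂] = (h/√(h²+k²))·[k·sin 2θ + h·(1 − cos 2θ)]`. -/
theorem qet_H2_expectation (k h : ℝ) (hk : 0 < k) (hh : 0 < h) (θ : ℝ) :
    (ρQET k h θ * H2m k h).trace =
      ((h / Real.sqrt (h ^ 2 + k ^ 2) *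
        (k * Real.sin (2 * θ) + h * (1 - Real.cos (2 * θ))) : ℝ) : ℂ) := by
  --

  set r := Real.sqrt (h ^ 2 + k ^ 2) with hrdef
  have hr : 0 < r := Real.sqrt_pos.2 (by positivity)
  have hr2 : r ^ 2 = h ^ 2 + k ^ 2 := Real.sq_sqrt (by positivity)
  have hhr : h / r ≤ 1 := by
    rw [div_le_one hr, hrdef]
    calc h = Real.sqrt (h ^ 2) := by rw [Real.sqrt_sq hh.le]
    _ ≤ Real.sqrt (h ^ 2 + k ^ 2) := Real.sqrt_le_sqrt (by nlinarith)
  have h1m : (0:ℝ) ≤ 1 - h / r := by linarith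
  have h1p : (0:ℝ) ≤ 1 + h / r := by positivity
  set A := (1 / Real.sqrt 2 * Real.sqrt (1 - h / r) : ℝ) with hAdef
  set B := (1 / Real.sqrt 2 * Real.sqrt (1 + h / r) : ℝ) with hBdef
  have hA2 : A ^ 2 = (1 - h / r) / 2 := by
    rw [hAdef, mul_pow, div_pow, one_pow, Real.sq_sqrt (by norm_num : (0:ℝ) ≤ 2),
      Real.sq_sqrt h1m]; ring
  have hB2 : B ^ 2 = (1 + h / r) / 2 := by
    rw [hBdef, mul_pow, div_pow, one_pow, Real.sq_sqrt (by norm_num : (0:ℝ) ≤ 2),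
      Real.sq_sqrt h1p]; ring
  have hAB : A * B = k / (2 * r) := by
    have e1 : (1 - h / r) * (1 + h / r) = (k / r) ^ 2 := by
      field_simp
      linear_combination hr2
    have : A * B = 1 / Real.sqrt 2 * (1 / Real.sqrt 2) *
        Real.sqrt ((1 - h / r) * (1 + h / r)) := by
      rw [Real.sqrt_mul h1m]; ring
    rw [this, e1, Real.sqrt_sq (by positivity), div_mul_div_comm, one_mul,
      Real.mul_self_sqrt (by norm_num : (0:ℝ) ≤ 2)]
    field_simp
  -- the post-measurement vectors
  have hy : ∀ μ : ℝ, μ = -1 ∨ μ = 1 →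
      (UB μ θ * PA μ) *ᵥ gs k h =
        vec2 !![(((Real.cos θ * A + Real.sin θ * B) / 2 : ℝ) : ℂ),
                ((μ * (Real.sin θ * A - Real.cos θ * B) / 2 : ℝ) : ℂ);
                ((μ * (Real.cos θ * A + Real.sin θ * B) / 2 : ℝ) : ℂ),
                (((Real.sin θ * A - Real.cos θ * B) / 2 : ℝ) : ℂ)] := by
    rintro μ (rfl | rfl) <;>
    · rw [← Matrix.mulVec_mulVec]
      ext ⟨i, j⟩
      fin_cases i <;> fin_cases j <;>
        simp [UB, PA, gs, e00, e11, X1, Y2, σx, σy, σz, vec2, Matrix.mulVec,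
          dotProduct, Fintype.sum_prod_type, Fin.sum_univ_two, Matrix.add_apply,
          Matrix.smul_apply, Matrix.one_apply, Matrix.sub_apply, kroneckerMap_apply,
          Prod.ext_iff, hAdef, hBdef] <;>
        push_cast <;> ring_nf <;> simp [Complex.I_sq] <;> push_cast <;> ring
  -- action of H2m on such a vector
  have hHy : ∀ w x y z : ℝ,
      H2m k h *ᵥ vec2 !![((w : ℝ) : ℂ), ((x : ℝ) : ℂ); ((y : ℝ) : ℂ), ((z : ℝ) : ℂ)] =
        vec2 !![(((h + h ^ 2 / r) * w : ℝ) : ℂ), (((-h + h ^ 2 / r) * x : ℝ) : ℂ);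
                (((h + h ^ 2 / r) * y : ℝ) : ℂ), (((-h + h ^ 2 / r) * z : ℝ) : ℂ)] := by
    intro w x y z
    ext ⟨i, j⟩
    fin_cases i <;> fin_cases j <;>
      simp [H2m, Z2, σz, vec2, Matrix.mulVec, dotProduct, Fintype.sum_prod_type,
        Fin.sum_univ_two, Matrix.add_apply, Matrix.smul_apply, Matrix.one_apply,
        kroneckerMap_apply, Prod.ext_iff, hrdef] <;>
      push_cast <;> ring
  -- dot products of such vectors
  have hdot : ∀ w x y z w' x' y' z' : ℝ,
      star (vec2 !![((w : ℝ) : ℂ), ((x : ℝ) : ℂ); ((y : ℝ) : ℂ), ((z : ℝ) : ℂ)]) ⬝ᵥ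
        vec2 !![((w' : ℝ) : ℂ), ((x' : ℝ) : ℂ); ((y' : ℝ) : ℂ), ((z' : ℝ) : ℂ)] =
        ((w * w' + x * x' + y * y' + z * z' : ℝ) : ℂ) := by
    intro w x y z w' x' y' z'
    simp [dotProduct, Fintype.sum_prod_type, Fin.sum_univ_two, vec2,
      Pi.star_apply, Complex.conj_ofReal]
    push_cast; ring
  have hterm : ∀ μ : ℝ, μ = -1 ∨ μ = 1 →
      (UB μ θ * PA μ * gProj k h * PA μ * (UB μ θ)ᴴ * H2m k h).trace =
        (((h + h ^ 2 / r) * ((Real.cos θ * A + Real.sin θ * B) / 2 *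
            ((Real.cos θ * A + Real.sin θ * B) / 2)) +
          (-h + h ^ 2 / r) * (μ * (Real.sin θ * A - Real.cos θ * B) / 2 *
            (μ * (Real.sin θ * A - Real.cos θ * B) / 2)) +
          (h + h ^ 2 / r) * (μ * (Real.cos θ * A + Real.sin θ * B) / 2 *
            (μ * (Real.cos θ * A + Real.sin θ * B) / 2)) +
          (-h + h ^ 2 / r) * ((Real.sin θ * A - Real.cos θ * B) / 2 *
            ((Real.sin θ * A - Real.cos θ * B) / 2)) : ℝ) : ℂ) := by
    intro μ hμ
    have hassoc : UB μ θ * PA μ * gProj k h * PA μ * (UB μ θ)ᴴ * H2m k h =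
        (UB μ θ * PA μ) * vecMulVec (gs k h) (star (gs k h)) * (UB μ θ * PA μ)ᴴ * H2m k h := by
      rw [Matrix.conjTranspose_mul, PA_herm]
      simp only [gProj, mul_assoc]
    rw [hassoc, key_trace, hy μ hμ, hHy, hdot]
    push_cast; ring
  have expand : ρQET k h θ * H2m k h =
      UB (-1) θ * PA (-1) * gProj k h * PA (-1) * (UB (-1) θ)ᴴ * H2m k h
      + UB 1 θ * PA 1 * gProj k h * PA 1 * (UB 1 θ)ᴴ * H2m k h := by
    rw [ρQET, add_mul]
  rw [expand, Matrix.trace_add, hterm (-1) (Or.inl rfl), hterm 1 (Or.inr rfl),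
    ← Complex.ofReal_add]
  rw [Complex.ofReal_inj]
  rw [Real.sin_two_mul, Real.cos_two_mul]
  have hpy : Real.sin θ ^ 2 + Real.cos θ ^ 2 = 1 := Real.sin_sq_add_cos_sq θ
  set c := Real.cos θ
  set s := Real.sin θ
  linear_combination ((h + h ^ 2 / r) * c ^ 2 + (-h + h ^ 2 / r) * s ^ 2) * hA2
    + ((h + h ^ 2 / r) * s ^ 2 + (-h + h ^ 2 / r) * c ^ 2) * hB2
    + 4 * h * c * s * hAB + (2 * h ^ 2 / r) * hpy
end
end

section
/- For every θ ∈ ℝ, the expectation value of the interaction term in the post-protocol state satisfies Tr[ρ_QET(θ)·V] = (2k/√(h²+k²))·[−h·sin 2θ + k·(1 − cos 2θ)]. -/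
open Matrix Kronecker
open scoped ComplexOrder

noncomputable section

set_option maxHeartbeats 2000000 in
/-- `Tr[ρ_QET(θ)·V] = (2k/√(h²+k²))·[−h·sin 2θ + k·(1 − cos 2θ)]`. -/
theorem qet_V_expectation (k h : ℝ) (hk : 0 < k) (hh : 0 < h) (θ : ℝ) :
    (ρQET k h θ * Vm k h).trace =
      ((2 * k / Real.sqrt (h ^ 2 + k ^ 2) *
        (-h * Real.sin (2 * θ) + k * (1 - Real.cos (2 * θ))) : ℝ) : ℂ) := by
  have hr : (0:ℝ) < Real.sqrt (h ^ 2 + k ^ 2) := Real.sqrt_pos.2 (by positivity)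
  set r := Real.sqrt (h ^ 2 + k ^ 2) with hrdef
  have hr2 : r ^ 2 = h ^ 2 + k ^ 2 := Real.sq_sqrt (by positivity)
  have hhr : h / r ≤ 1 := by
    rw [div_le_one hr]
    nlinarith [Real.sqrt_le_sqrt (show h^2 ≤ h^2 + k^2 by nlinarith), Real.sqrt_sq hh.le]
  set A := 1 / Real.sqrt 2 * Real.sqrt (1 - h / r) with hAdef
  set B := 1 / Real.sqrt 2 * Real.sqrt (1 + h / r) with hBdef
  have hA : A ^ 2 = (1 - h / r) / 2 := by
    rw [hAdef, mul_pow, div_pow, one_pow, Real.sq_sqrt (by norm_num), Real.sq_sqrt (by linarith)]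
    ring
  have hB : B ^ 2 = (1 + h / r) / 2 := by
    rw [hBdef, mul_pow, div_pow, one_pow, Real.sq_sqrt (by norm_num), Real.sq_sqrt (by positivity)]
    ring
  have hAB : A * B = k / (2 * r) := by
    have : (A * B) ^ 2 = (k / (2 * r)) ^ 2 := by
      rw [mul_pow, hA, hB]
      field_simp
      nlinarith [hr2]
    have h1 : 0 ≤ A := by positivity
    have h2 : 0 ≤ B := by positivity
    have h3 : 0 < k / (2 * r) := by positivity
    nlinarith [this, mul_nonneg h1 h2]
  have hgs : gs k h = fun p => (A:ℂ) * e00 p - (B:ℂ) * e11 p := by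
    funext p
    rw [gs, ← hrdef, ← hAdef, ← hBdef]
  have hhr2 : h ^ 2 ≤ r ^ 2 := by nlinarith
  clear_value A B
  clear hAdef hBdef
  rw [Real.sin_two_mul, Real.cos_two_mul]
  set c := Real.cos θ with hcdef
  set s := Real.sin θ with hsdef
  have hcs : c ^ 2 + s ^ 2 = 1 := by rw [hcdef, hsdef]; exact Real.cos_sq_add_sin_sq θ
  clear_value c s
  have hVm : Vm k h = ((2 * k : ℝ) : ℂ) • XX + ((2 * k ^ 2 / r : ℝ) : ℂ) • (1 : M4) := rfl
  clear_value r
  simp only [ρQET, hVm, UB, PA, gProj, hgs, e00, e11, X1, Y2, XX, σx, σy]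
  simp [Matrix.trace, Matrix.mul_apply, Fintype.sum_prod_type, Fin.sum_univ_two,
    Matrix.vecMulVec_apply, Matrix.conjTranspose_apply, Matrix.kroneckerMap_apply,
    Matrix.one_apply, Prod.ext_iff]
  ring_nf
  have hI4 : Complex.I ^ 4 = 1 := by norm_num [pow_succ, Complex.I_sq]
  simp only [hI4, Complex.I_sq, ← Complex.ofReal_cos, ← Complex.ofReal_sin, Complex.conj_ofReal, ← hcdef, ← hsdef]
  have hAc : ((A:ℂ))^2 = (1 - (h:ℂ) / r) / 2 := by rw [show ((A:ℂ))^2 = ((A^2 : ℝ) : ℂ) by push_cast; ring, hA]; push_cast; ring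
  have hBc : ((B:ℂ))^2 = (1 + (h:ℂ) / r) / 2 := by rw [show ((B:ℂ))^2 = ((B^2 : ℝ) : ℂ) by push_cast; ring, hB]; push_cast; ring
  have hABc : ((A:ℂ)) * B = (k:ℂ) / (2 * r) := by rw [show ((A:ℂ)) * B = ((A*B : ℝ) : ℂ) by push_cast; ring, hAB]; push_cast; ring
  have hcsc : ((c:ℂ))^2 + (s:ℂ)^2 = 1 := by exact_mod_cast hcs
  have hrc : ((r:ℂ)) ≠ 0 := by exact_mod_cast hr.ne'
  linear_combination (2*(k:ℂ)^2/r*((c:ℂ)^2+(s:ℂ)^2)+4*(k:ℂ)*c*s) * hAc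
    + (2*(k:ℂ)^2/r*((c:ℂ)^2+(s:ℂ)^2)-4*(k:ℂ)*c*s) * hBc
    - 4*(k:ℂ)*((c:ℂ)^2-(s:ℂ)^2) * hABc + 4*(k:ℂ)^2/r * hcsc
end
end

section
/- For every θ ∈ ℝ, Bob's expected local energy in the post-protocol state satisfies Tr[ρ_QET(θ)·(H₂ + V)] = (1/√(h²+k²))·[−h·k·sin 2θ + (h² + 2k²)·(1 − cos 2θ)]. -/
open Matrix Kronecker
open scoped ComplexOrder

noncomputable section

lemma conj_rank (M : M4) (v : (Fin 2 × Fin 2) → ℂ) :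
    M * Matrix.vecMulVec v (star v) * Mᴴ =
    Matrix.vecMulVec (M.mulVec v) (star (M.mulVec v)) := by
  ext i j
  simp only [Matrix.mul_apply, Matrix.vecMulVec_apply, Matrix.mulVec, dotProduct,
    Matrix.conjTranspose_apply, Pi.star_apply, star_sum, star_add, star_mul', Finset.sum_mul,
    Finset.mul_sum, Fintype.sum_prod_type, Fin.sum_univ_two]
  ring

lemma X1_herm : X1ᴴ = X1 := by
  ext i j
  fin_cases i <;> fin_cases j <;>
    simp [X1, σx, Matrix.conjTranspose_apply, Matrix.one_apply] <;> norm_num [Prod.ext_iff]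

lemma rho_term (k h ν μ θ : ℝ) :
    UB ν θ * PA μ * gProj k h * PA μ * (UB ν θ)ᴴ =
    Matrix.vecMulVec ((UB ν θ * PA μ).mulVec (gs k h))
      (star ((UB ν θ * PA μ).mulVec (gs k h))) := by
  rw [← conj_rank]
  simp only [gProj, Matrix.conjTranspose_mul, PA_herm]
  noncomm_ring

set_option maxHeartbeats 2000000 in
/-- Bob's expected local energy:
`Tr[ρ_QET(θ)·(H₂+V)] = (1/√(h²+k²))·[−hk·sin 2θ + (h²+2k²)·(1 − cos 2θ)]`. -/
theorem qet_local_energy_expectation (k h : ℝ) (hk : 0 < k) (hh : 0 < h) (θ : ℝ) :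
    (ρQET k h θ * (H2m k h + Vm k h)).trace =
      ((1 / Real.sqrt (h ^ 2 + k ^ 2) *
        (-(h * k) * Real.sin (2 * θ) + (h ^ 2 + 2 * k ^ 2) * (1 - Real.cos (2 * θ))) : ℝ) : ℂ) := by
  have hr0 : (0:ℝ) < h^2 + k^2 := by positivity
  set r := Real.sqrt (h^2 + k^2) with hrdef
  have hr : 0 < r := Real.sqrt_pos.2 hr0
  have hr2 : r^2 = h^2 + k^2 := Real.sq_sqrt hr0.le
  have hhr : h/r ≤ 1 := by
    rw [div_le_one hr]
    calc h = Real.sqrt (h^2) := (Real.sqrt_sq hh.le).symm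
    _ ≤ r := Real.sqrt_le_sqrt (by nlinarith)
  have ha : Real.sqrt (1 - h/r) ^ 2 = 1 - h/r := Real.sq_sqrt (by linarith)
  have hb : Real.sqrt (1 + h/r) ^ 2 = 1 + h/r := Real.sq_sqrt (by positivity)
  have hab : Real.sqrt (1 - h/r) * Real.sqrt (1 + h/r) = k/r := by
    rw [← Real.sqrt_mul (by linarith)]
    have h1 : (1 - h/r) * (1 + h/r) = (k/r)^2 := by
      field_simp
      nlinarith [hr2]
    rw [h1, Real.sqrt_sq (by positivity)]
  have hs2 : Real.sqrt 2 ^ 2 = 2 := Real.sq_sqrt (by norm_num)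
  rw [Real.sin_two_mul, Real.cos_two_mul]
  rw [ρQET, rho_term, rho_term, Matrix.add_mul, Matrix.trace_add]
  simp only [UB, PA, H2m, Vm, X1, Z2, Y2, XX, gs, e00, e11, σx, σy, σz,
    Matrix.trace, Matrix.diag, Matrix.mul_apply, Matrix.add_apply, Matrix.smul_apply,
    Matrix.sub_apply, Matrix.vecMulVec_apply, Matrix.mulVec, dotProduct,
    Pi.star_apply, Matrix.one_apply, Matrix.kroneckerMap_apply,
    Fintype.sum_prod_type, Fin.sum_univ_two, Matrix.cons_val', Matrix.cons_val_zero,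
    Matrix.cons_val_one, Matrix.head_cons, Matrix.head_fin_const, Matrix.empty_val',
    Matrix.cons_val_fin_one, Matrix.of_apply, smul_eq_mul, Prod.mk.injEq, Fin.isValue,
    star_add, star_sub, star_mul', star_one, star_zero, Complex.star_def,
    Complex.conj_ofReal, _root_.map_mul, _root_.map_one, _root_.map_zero, Complex.conj_I, mul_zero, zero_mul,
    mul_one, one_mul, add_zero, zero_add, sub_zero, zero_sub, mul_neg, neg_mul, neg_neg,
    map_neg, neg_zero]
  norm_num
  simp only [← Complex.ofReal_cos, ← Complex.ofReal_sin, Complex.conj_ofNat, map_ofNat]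
  have hI4 : Complex.I ^ 4 = 1 := by norm_num
  ring_nf
  simp only [Complex.I_sq, hI4]
  ring_nf
  norm_cast
  have ht2 : ((Real.sqrt 2)⁻¹ : ℝ)^2 = 1/2 := by
    rw [inv_pow, hs2]; norm_num
  have hpy : Real.sin θ ^ 2 = 1 - Real.cos θ ^ 2 := by
    nlinarith [Real.sin_sq_add_cos_sq θ]
  have ha' : Real.sqrt (1 - h * (Real.sqrt (h^2+k^2))⁻¹) ^ 2 = 1 - h * (Real.sqrt (h^2+k^2))⁻¹ := by
    rw [← div_eq_mul_inv]; exact ha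
  have hb' : Real.sqrt (1 + h * (Real.sqrt (h^2+k^2))⁻¹) ^ 2 = 1 + h * (Real.sqrt (h^2+k^2))⁻¹ := by
    rw [← div_eq_mul_inv]; exact hb
  have hab' : Real.sqrt (1 - h * (Real.sqrt (h^2+k^2))⁻¹) * Real.sqrt (1 + h * (Real.sqrt (h^2+k^2))⁻¹)
      = k * (Real.sqrt (h^2+k^2))⁻¹ := by
    rw [← div_eq_mul_inv, ← div_eq_mul_inv]; exact hab
  linear_combination ((-1)*(Real.sin θ)^2*((Real.sqrt 2)⁻¹)^2*(h) + (2)*(Real.sin θ)^2*((Real.sqrt 2)⁻¹)^2*((Real.sqrt (h^2+k^2))⁻¹)*(k)^2 + (1)*(Real.sin θ)^2*((Real.sqrt 2)⁻¹)^2*((Real.sqrt (h^2+k^2))⁻¹)*(h)^2 + (4)*(Real.cos θ)*(Real.sin θ)*((Real.sqrt 2)⁻¹)^2*(k) + (1)*(Real.cos θ)^2*((Real.sqrt 2)⁻¹)^2*(h) + (2)*(Real.cos θ)^2*((Real.sqrt 2)⁻¹)^2*((Real.sqrt (h^2+k^2))⁻¹)*(k)^2 + (1)*(Real.cos θ)^2*((Real.sqrt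 2)⁻¹)^2*((Real.sqrt (h^2+k^2))⁻¹)*(h)^2) * ha'
    + ((1)*(Real.sin θ)^2*((Real.sqrt 2)⁻¹)^2*(h) + (2)*(Real.sin θ)^2*((Real.sqrt 2)⁻¹)^2*((Real.sqrt (h^2+k^2))⁻¹)*(k)^2 + (1)*(Real.sin θ)^2*((Real.sqrt 2)⁻¹)^2*((Real.sqrt (h^2+k^2))⁻¹)*(h)^2 + (-4)*(Real.cos θ)*(Real.sin θ)*((Real.sqrt 2)⁻¹)^2*(k) + (-1)*(Real.cos θ)^2*((Real.sqrt 2)⁻¹)^2*(h) + (2)*(Real.cos θ)^2*((Real.sqrt 2)⁻¹)^2*((Real.sqrt (h^2+k^2))⁻¹)*(k)^2 + (1)*(Real.cos θ)^2*((Real.sqrt 2)⁻¹)^2*((Real.sqrt (h^2+k^2))⁻¹)*(h)^2) * hb'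
    + ((4)*(Real.sin θ)^2*((Real.sqrt 2)⁻¹)^2*(k) + (4)*(Real.cos θ)*(Real.sin θ)*((Real.sqrt 2)⁻¹)^2*(h) + (-4)*(Real.cos θ)^2*((Real.sqrt 2)⁻¹)^2*(k)) * hab'
    + ((8)*(Real.sin θ)^2*((Real.sqrt (h^2+k^2))⁻¹)*(k)^2 + (4)*(Real.sin θ)^2*((Real.sqrt (h^2+k^2))⁻¹)*(h)^2 + (-4)*(Real.cos θ)*(Real.sin θ)*((Real.sqrt (h^2+k^2))⁻¹)*(h)*(k)) * ht2
    + ((4)*((Real.sqrt (h^2+k^2))⁻¹)*(k)^2 + (2)*((Real.sqrt (h^2+k^2))⁻¹)*(h)^2) * hpy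
end
end

section
/- (Completeness of the QET verification.) If θ ∈ ℝ is the QET-optimal angle, i.e. cos 2θ = (h²+2k²)/√((h²+2k²)² + (hk)²) and sin 2θ = hk/√((h²+2k²)² + (hk)²), then Bob's expected local energy equals Tr[ρ_QET(θ)·(H₂ + V)] = ((h²+2k²) − √((h²+2k²)² + (hk)²))/√(h²+k²), and this quantity is strictly negative for all h, k > 0. -/
open Matrix Kronecker
open scoped ComplexOrder

noncomputable section

lemma UB_eq' (ν θ c s : ℝ) (hc : c = Real.cos θ) (hs : s = Real.sin θ) :
    UB ν θ = ((c : ℝ) : ℂ) • (1 : M4)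
    + ((ν * s : ℝ) : ℂ) • ((1 : M2) ⊗ₖ !![0,-1;1,0]) := by
  subst hc hs
  ext ⟨i,j⟩ ⟨i',j'⟩
  fin_cases i <;> fin_cases j <;> fin_cases i' <;> fin_cases j' <;>
    simp [UB, Y2, σy, Matrix.one_apply, Prod.ext_iff, ← Complex.ofReal_sin,
      ← Complex.ofReal_cos, Complex.conj_ofReal, Complex.I_sq] <;>
    ring_nf <;> simp [Complex.I_sq]

lemma UBH_eq' (ν θ c s : ℝ) (hc : c = Real.cos θ) (hs : s = Real.sin θ) :
    (UB ν θ)ᴴ = ((c : ℝ) : ℂ) • (1 : M4)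
    + ((ν * s : ℝ) : ℂ) • ((1 : M2) ⊗ₖ !![0,1;-1,0]) := by
  subst hc hs
  ext ⟨i,j⟩ ⟨i',j'⟩
  fin_cases i <;> fin_cases j <;> fin_cases i' <;> fin_cases j' <;>
    simp [UB, Y2, σy, Matrix.one_apply, Prod.ext_iff, Matrix.conjTranspose_apply,
      ← Complex.ofReal_sin, ← Complex.ofReal_cos, Complex.conj_ofReal, Complex.I_sq] <;>
    ring_nf <;> simp [Complex.I_sq]

lemma gs_eq' (k h a b : ℝ)
    (ha : a = 1 / Real.sqrt 2 * Real.sqrt (1 - h / Real.sqrt (h ^ 2 + k ^ 2)))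
    (hb : b = 1 / Real.sqrt 2 * Real.sqrt (1 + h / Real.sqrt (h ^ 2 + k ^ 2))) :
    gs k h = fun p => ((a : ℝ) : ℂ) * e00 p - ((b : ℝ) : ℂ) * e11 p := by
  funext p; rw [ha, hb]; rfl

set_option maxHeartbeats 4000000 in
lemma rho_eq (k h θ a b c s : ℝ)
    (hg : gs k h = fun p => ((a : ℝ) : ℂ) * e00 p - ((b : ℝ) : ℂ) * e11 p)
    (hc : c = Real.cos θ) (hs : s = Real.sin θ) :
    ρQET k h θ = (((c * a + s * b) ^ 2 / 2 : ℝ) : ℂ) • ((1 : M2) ⊗ₖ !![1,0;0,0])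
      + (((s * a - c * b) ^ 2 / 2 : ℝ) : ℂ) • ((1 : M2) ⊗ₖ !![0,0;0,1])
      + (((c * a + s * b) * (s * a - c * b) / 2 : ℝ) : ℂ) • XX := by
  rw [ρQET, gProj, hg, UBH_eq' (-1) θ c s hc hs, UBH_eq' 1 θ c s hc hs,
    UB_eq' (-1) θ c s hc hs, UB_eq' 1 θ c s hc hs]
  ext ⟨i,j⟩ ⟨i',j'⟩
  fin_cases i <;> fin_cases j <;> fin_cases i' <;> fin_cases j' <;>
  · simp only [Matrix.mul_apply, Matrix.add_apply, Matrix.smul_apply, Matrix.one_apply,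
      Matrix.kroneckerMap_apply, Matrix.vecMulVec_apply, Pi.star_apply, PA, X1, XX, σx,
      e00, e11, Fintype.sum_prod_type, Fin.sum_univ_two,
      Matrix.cons_val', Matrix.cons_val_zero, Matrix.cons_val_one, Matrix.head_cons,
      Matrix.head_fin_const, Matrix.empty_val', Matrix.cons_val_fin_one, smul_eq_mul,
      star_sub, star_mul', Complex.conj_ofReal, Prod.mk.injEq]
    push_cast
    norm_num
    try ring

set_option maxHeartbeats 4000000 in
/-- Completeness: at the QET-optimal angle, Bob's expected local energy
equals `((h²+2k²) − √((h²+2k²)² + (hk)²))/√(h²+k²)`, which is strictly negative. -/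
theorem qet_completeness (k h : ℝ) (hk : 0 < k) (hh : 0 < h) (θ : ℝ)
    (hcos : Real.cos (2 * θ) =
      (h ^ 2 + 2 * k ^ 2) / Real.sqrt ((h ^ 2 + 2 * k ^ 2) ^ 2 + (h * k) ^ 2))
    (hsin : Real.sin (2 * θ) =
      h * k / Real.sqrt ((h ^ 2 + 2 * k ^ 2) ^ 2 + (h * k) ^ 2)) :
    (ρQET k h θ * (H2m k h + Vm k h)).trace =
      ((((h ^ 2 + 2 * k ^ 2) - Real.sqrt ((h ^ 2 + 2 * k ^ 2) ^ 2 + (h * k) ^ 2)) /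
          Real.sqrt (h ^ 2 + k ^ 2) : ℝ) : ℂ) ∧
    ((h ^ 2 + 2 * k ^ 2) - Real.sqrt ((h ^ 2 + 2 * k ^ 2) ^ 2 + (h * k) ^ 2)) /
        Real.sqrt (h ^ 2 + k ^ 2) < 0 := by
  have hr0 : 0 < Real.sqrt (h ^ 2 + k ^ 2) := Real.sqrt_pos.mpr (by positivity)
  have hr2 : (Real.sqrt (h ^ 2 + k ^ 2)) ^ 2 = h ^ 2 + k ^ 2 :=
    Real.sq_sqrt (by positivity)
  have hR0 : 0 < Real.sqrt ((h ^ 2 + 2 * k ^ 2) ^ 2 + (h * k) ^ 2) :=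
    Real.sqrt_pos.mpr (by positivity)
  have hR2 : (Real.sqrt ((h ^ 2 + 2 * k ^ 2) ^ 2 + (h * k) ^ 2)) ^ 2
      = (h ^ 2 + 2 * k ^ 2) ^ 2 + (h * k) ^ 2 := Real.sq_sqrt (by positivity)
  set r := Real.sqrt (h ^ 2 + k ^ 2) with hr_def
  set R := Real.sqrt ((h ^ 2 + 2 * k ^ 2) ^ 2 + (h * k) ^ 2) with hR_def
  -- negativity
  have hAR : h ^ 2 + 2 * k ^ 2 < R := by nlinarith [hR2, hR0, pow_pos (mul_pos hh hk) 2]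
  have hneg : ((h ^ 2 + 2 * k ^ 2) - R) / r < 0 :=
    div_neg_of_neg_of_pos (by linarith) hr0
  refine ⟨?_, hneg⟩
  -- scalar facts
  set c := Real.cos θ with hc_def
  set s := Real.sin θ with hs_def
  set a := 1 / Real.sqrt 2 * Real.sqrt (1 - h / r) with ha_def
  set b := 1 / Real.sqrt 2 * Real.sqrt (1 + h / r) with hb_def
  have hrne : r ≠ 0 := hr0.ne'
  have hRne : R ≠ 0 := hR0.ne'
  have hhr : h ≤ r := by nlinarith
  have hx0 : (0:ℝ) ≤ 1 - h / r := by
    rw [sub_nonneg, div_le_one hr0]; exact hhr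
  have hy0 : (0:ℝ) ≤ 1 + h / r := by positivity
  have HAr : 2 * a ^ 2 * r = r - h := by
    rw [ha_def, mul_pow, div_pow, one_pow, Real.sq_sqrt (by norm_num : (0:ℝ) ≤ 2),
      Real.sq_sqrt hx0]
    field_simp
  have HBr : 2 * b ^ 2 * r = r + h := by
    rw [hb_def, mul_pow, div_pow, one_pow, Real.sq_sqrt (by norm_num : (0:ℝ) ≤ 2),
      Real.sq_sqrt hy0]
    field_simp
  have HABr : 2 * (a * b) * r = k := by
    have hxy : (1 - h / r) * (1 + h / r) = (k / r) ^ 2 := by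
      field_simp
      linear_combination hr2
    have hab : a * b = 1 / 2 * (k / r) := by
      rw [ha_def, hb_def]
      rw [show 1 / Real.sqrt 2 * Real.sqrt (1 - h / r) *
          (1 / Real.sqrt 2 * Real.sqrt (1 + h / r))
          = (1 / Real.sqrt 2 * (1 / Real.sqrt 2)) *
            (Real.sqrt (1 - h / r) * Real.sqrt (1 + h / r)) by ring]
      rw [← Real.sqrt_mul hx0, hxy, Real.sqrt_sq (by positivity),
        div_mul_div_comm, one_mul, Real.mul_self_sqrt (by norm_num : (0:ℝ) ≤ 2)]
    rw [hab]; field_simp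
  have Hcr : 2 * c ^ 2 * R = R + (h ^ 2 + 2 * k ^ 2) := by
    have h1 : 2 * c ^ 2 - 1 = (h ^ 2 + 2 * k ^ 2) / R := by
      rw [← hcos, hc_def, Real.cos_two_mul]
    have h2 : (2 * c ^ 2 - 1) * R = h ^ 2 + 2 * k ^ 2 := by
      rw [h1]; field_simp
    linarith
  have Hpyr : c ^ 2 + s ^ 2 = 1 := by
    rw [hc_def, hs_def]; exact Real.cos_sq_add_sin_sq θ
  have Hsr : 2 * s ^ 2 * R = R - (h ^ 2 + 2 * k ^ 2) := by nlinarith [Hcr, Hpyr]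
  have Hcsr : 2 * (c * s) * R = h * k := by
    have h1 : 2 * s * c = h * k / R := by
      rw [← hsin, hs_def, hc_def, Real.sin_two_mul]
    have h2 : (2 * s * c) * R = h * k := by rw [h1]; field_simp
    linarith [h2]
  -- complex versions
  have HA : 2 * ((a:ℝ):ℂ) ^ 2 * ((r:ℝ):ℂ) = ((r:ℝ):ℂ) - ((h:ℝ):ℂ) := by
    exact_mod_cast congrArg (Complex.ofReal) HAr
  have HB : 2 * ((b:ℝ):ℂ) ^ 2 * ((r:ℝ):ℂ) = ((r:ℝ):ℂ) + ((h:ℝ):ℂ) := by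
    exact_mod_cast congrArg (Complex.ofReal) HBr
  have HAB : 2 * (((a:ℝ):ℂ) * ((b:ℝ):ℂ)) * ((r:ℝ):ℂ) = ((k:ℝ):ℂ) := by
    exact_mod_cast congrArg (Complex.ofReal) HABr
  have Hc : 2 * ((c:ℝ):ℂ) ^ 2 * ((R:ℝ):ℂ) = ((R:ℝ):ℂ) + (((h:ℝ):ℂ) ^ 2 + 2 * ((k:ℝ):ℂ) ^ 2) := by
    exact_mod_cast congrArg (Complex.ofReal) Hcr
  have Hs : 2 * ((s:ℝ):ℂ) ^ 2 * ((R:ℝ):ℂ) = ((R:ℝ):ℂ) - (((h:ℝ):ℂ) ^ 2 + 2 * ((k:ℝ):ℂ) ^ 2) := by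
    exact_mod_cast congrArg (Complex.ofReal) Hsr
  have Hcs : 2 * (((c:ℝ):ℂ) * ((s:ℝ):ℂ)) * ((R:ℝ):ℂ) = ((h:ℝ):ℂ) * ((k:ℝ):ℂ) := by
    exact_mod_cast congrArg (Complex.ofReal) Hcsr
  have Hpy : ((c:ℝ):ℂ) ^ 2 + ((s:ℝ):ℂ) ^ 2 = 1 := by
    exact_mod_cast congrArg (Complex.ofReal) Hpyr
  -- matrix rewrites
  have hgs := gs_eq' k h a b (by rw [ha_def, hr_def]) (by rw [hb_def, hr_def])
  have hρ := rho_eq k h θ a b c s hgs hc_def hs_def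
  have h4ne : (4 * ((r:ℝ):ℂ) * ((R:ℝ):ℂ)) ≠ 0 := by
    simp [Complex.ofReal_ne_zero, hrne, hRne]
  have h2rne : (2 * ((r:ℝ):ℂ)) ≠ 0 := by
    simp [Complex.ofReal_ne_zero, hrne]
  -- products of scalar identities
  have PyA : (((c:ℝ):ℂ) ^ 2 + ((s:ℝ):ℂ) ^ 2) * (2 * ((a:ℝ):ℂ) ^ 2 * ((r:ℝ):ℂ))
      = 1 * (((r:ℝ):ℂ) - ((h:ℝ):ℂ)) := by rw [Hpy, HA]
  have PyB : (((c:ℝ):ℂ) ^ 2 + ((s:ℝ):ℂ) ^ 2) * (2 * ((b:ℝ):ℂ) ^ 2 * ((r:ℝ):ℂ))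
      = 1 * (((r:ℝ):ℂ) + ((h:ℝ):ℂ)) := by rw [Hpy, HB]
  have PcA : (2 * ((c:ℝ):ℂ) ^ 2 * ((R:ℝ):ℂ)) * (2 * ((a:ℝ):ℂ) ^ 2 * ((r:ℝ):ℂ))
      = (((R:ℝ):ℂ) + (((h:ℝ):ℂ) ^ 2 + 2 * ((k:ℝ):ℂ) ^ 2)) * (((r:ℝ):ℂ) - ((h:ℝ):ℂ)) := by
    rw [Hc, HA]
  have PsA : (2 * ((s:ℝ):ℂ) ^ 2 * ((R:ℝ):ℂ)) * (2 * ((a:ℝ):ℂ) ^ 2 * ((r:ℝ):ℂ))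
      = (((R:ℝ):ℂ) - (((h:ℝ):ℂ) ^ 2 + 2 * ((k:ℝ):ℂ) ^ 2)) * (((r:ℝ):ℂ) - ((h:ℝ):ℂ)) := by
    rw [Hs, HA]
  have PcB : (2 * ((c:ℝ):ℂ) ^ 2 * ((R:ℝ):ℂ)) * (2 * ((b:ℝ):ℂ) ^ 2 * ((r:ℝ):ℂ))
      = (((R:ℝ):ℂ) + (((h:ℝ):ℂ) ^ 2 + 2 * ((k:ℝ):ℂ) ^ 2)) * (((r:ℝ):ℂ) + ((h:ℝ):ℂ)) := by
    rw [Hc, HB]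
  have PsB : (2 * ((s:ℝ):ℂ) ^ 2 * ((R:ℝ):ℂ)) * (2 * ((b:ℝ):ℂ) ^ 2 * ((r:ℝ):ℂ))
      = (((R:ℝ):ℂ) - (((h:ℝ):ℂ) ^ 2 + 2 * ((k:ℝ):ℂ) ^ 2)) * (((r:ℝ):ℂ) + ((h:ℝ):ℂ)) := by
    rw [Hs, HB]
  have PabCs : (2 * (((a:ℝ):ℂ) * ((b:ℝ):ℂ)) * ((r:ℝ):ℂ))
        * (2 * (((c:ℝ):ℂ) * ((s:ℝ):ℂ)) * ((R:ℝ):ℂ))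
      = ((k:ℝ):ℂ) * (((h:ℝ):ℂ) * ((k:ℝ):ℂ)) := by rw [HAB, Hcs]
  have PcsA : (2 * (((c:ℝ):ℂ) * ((s:ℝ):ℂ)) * ((R:ℝ):ℂ)) * (2 * ((a:ℝ):ℂ) ^ 2 * ((r:ℝ):ℂ))
      = (((h:ℝ):ℂ) * ((k:ℝ):ℂ)) * (((r:ℝ):ℂ) - ((h:ℝ):ℂ)) := by rw [Hcs, HA]
  have PcsB : (2 * (((c:ℝ):ℂ) * ((s:ℝ):ℂ)) * ((R:ℝ):ℂ)) * (2 * ((b:ℝ):ℂ) ^ 2 * ((r:ℝ):ℂ))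
      = (((h:ℝ):ℂ) * ((k:ℝ):ℂ)) * (((r:ℝ):ℂ) + ((h:ℝ):ℂ)) := by rw [Hcs, HB]
  have PabS : (2 * (((a:ℝ):ℂ) * ((b:ℝ):ℂ)) * ((r:ℝ):ℂ)) * (2 * ((s:ℝ):ℂ) ^ 2 * ((R:ℝ):ℂ))
      = ((k:ℝ):ℂ) * (((R:ℝ):ℂ) - (((h:ℝ):ℂ) ^ 2 + 2 * ((k:ℝ):ℂ) ^ 2)) := by rw [HAB, Hs]
  have PabC : (2 * (((a:ℝ):ℂ) * ((b:ℝ):ℂ)) * ((r:ℝ):ℂ)) * (2 * ((c:ℝ):ℂ) ^ 2 * ((R:ℝ):ℂ))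
      = ((k:ℝ):ℂ) * (((R:ℝ):ℂ) + (((h:ℝ):ℂ) ^ 2 + 2 * ((k:ℝ):ℂ) ^ 2)) := by rw [HAB, Hc]
  -- trace computations
  have hT1 : (ρQET k h θ).trace * (2 * ((r:ℝ):ℂ)) = 2 * ((r:ℝ):ℂ) := by
    rw [hρ]
    simp only [Matrix.trace_add, Matrix.trace_smul, Matrix.trace, Matrix.diag,
      Matrix.kroneckerMap_apply, Matrix.one_apply, XX, σx, Fintype.sum_prod_type,
      Fin.sum_univ_two, Matrix.cons_val', Matrix.cons_val_zero, Matrix.cons_val_one,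
      Matrix.head_cons, Matrix.head_fin_const, Matrix.empty_val', Matrix.cons_val_fin_one,
      smul_eq_mul]
    push_cast
    norm_num
    linear_combination PyA + PyB
  have hTZ : (ρQET k h θ * Z2).trace * (4 * ((r:ℝ):ℂ) * ((R:ℝ):ℂ))
      = -4 * ((h:ℝ):ℂ) * (((h:ℝ):ℂ) ^ 2 + ((k:ℝ):ℂ) ^ 2) := by
    rw [hρ]
    simp only [Matrix.add_mul, Matrix.smul_mul, Matrix.trace_add, Matrix.trace_smul,
      Matrix.trace, Matrix.diag, Matrix.mul_apply, Matrix.kroneckerMap_apply,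
      Matrix.one_apply, XX, Z2, σx, σz, Fintype.sum_prod_type,
      Fin.sum_univ_two, Matrix.cons_val', Matrix.cons_val_zero, Matrix.cons_val_one,
      Matrix.head_cons, Matrix.head_fin_const, Matrix.empty_val', Matrix.cons_val_fin_one,
      smul_eq_mul, Prod.mk.injEq]
    push_cast
    norm_num
    linear_combination PcA - PsA - PcB + PsB + 4 * PabCs
  have hTX : (ρQET k h θ * XX).trace * (4 * ((r:ℝ):ℂ) * ((R:ℝ):ℂ))
      = -8 * ((k:ℝ):ℂ) * (((h:ℝ):ℂ) ^ 2 + ((k:ℝ):ℂ) ^ 2) := by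
    rw [hρ]
    simp only [Matrix.add_mul, Matrix.smul_mul, Matrix.trace_add, Matrix.trace_smul,
      Matrix.trace, Matrix.diag, Matrix.mul_apply, Matrix.kroneckerMap_apply,
      Matrix.one_apply, XX, σx, Fintype.sum_prod_type,
      Fin.sum_univ_two, Matrix.cons_val', Matrix.cons_val_zero, Matrix.cons_val_one,
      Matrix.head_cons, Matrix.head_fin_const, Matrix.empty_val', Matrix.cons_val_fin_one,
      smul_eq_mul, Prod.mk.injEq]
    push_cast
    norm_num
    linear_combination 2 * PcsA - 2 * PcsB + 2 * PabS - 2 * PabC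
  -- splitting of the Hamiltonian
  have hHV : H2m k h + Vm k h = (h:ℂ) • Z2 + ((2 * k : ℝ):ℂ) • XX
      + (((h ^ 2 + 2 * k ^ 2) / r : ℝ):ℂ) • (1:M4) := by
    have hsc : ((h ^ 2 / r : ℝ):ℂ) + ((2 * k ^ 2 / r : ℝ):ℂ)
        = (((h ^ 2 + 2 * k ^ 2) / r : ℝ):ℂ) := by push_cast; ring
    simp only [H2m, Vm, ← hsc, add_smul]
    abel
  have htr : (ρQET k h θ * (H2m k h + Vm k h)).trace
      = (h:ℂ) * (ρQET k h θ * Z2).trace + ((2 * k : ℝ):ℂ) * (ρQET k h θ * XX).trace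
        + (((h ^ 2 + 2 * k ^ 2) / r : ℝ):ℂ) * (ρQET k h θ).trace := by
    rw [hHV]
    simp only [Matrix.mul_add, Matrix.trace_add, Matrix.mul_smul, Matrix.trace_smul,
      Matrix.mul_one, smul_eq_mul]
  -- individual trace values
  have hT1' : (ρQET k h θ).trace = 1 :=
    mul_right_cancel₀ h2rne (hT1.trans (one_mul _).symm)
  have hr2C : ((r:ℝ):ℂ) ^ 2 = ((h:ℝ):ℂ) ^ 2 + ((k:ℝ):ℂ) ^ 2 := by
    exact_mod_cast congrArg (Complex.ofReal) hr2
  have hR2C : ((R:ℝ):ℂ) ^ 2 = (((h:ℝ):ℂ) ^ 2 + 2 * ((k:ℝ):ℂ) ^ 2) ^ 2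
      + (((h:ℝ):ℂ) * ((k:ℝ):ℂ)) ^ 2 := by
    exact_mod_cast congrArg (Complex.ofReal) hR2
  have hRC : ((R:ℝ):ℂ) ≠ 0 := Complex.ofReal_ne_zero.mpr hRne
  have hrC : ((r:ℝ):ℂ) ≠ 0 := Complex.ofReal_ne_zero.mpr hrne
  have hTZ' : (ρQET k h θ * Z2).trace = ((-(h * r) / R : ℝ):ℂ) := by
    apply mul_right_cancel₀ h4ne
    rw [hTZ, show ((-(h * r) / R : ℝ):ℂ) = -(((h:ℝ):ℂ) * ((r:ℝ):ℂ)) / ((R:ℝ):ℂ) by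
      push_cast; ring]
    field_simp
    linear_combination hr2C
  have hTX' : (ρQET k h θ * XX).trace = ((-(2 * k * r) / R : ℝ):ℂ) := by
    apply mul_right_cancel₀ h4ne
    rw [hTX, show ((-(2 * k * r) / R : ℝ):ℂ) = -(2 * ((k:ℝ):ℂ) * ((r:ℝ):ℂ)) / ((R:ℝ):ℂ) by
      push_cast; ring]
    field_simp
    linear_combination 8 * hr2C
  -- assembly
  rw [htr, hT1', hTZ', hTX', mul_one]
  have hreal : h * (-(h * r) / R) + (2 * k) * (-(2 * k * r) / R)
      + (h ^ 2 + 2 * k ^ 2) / r = ((h ^ 2 + 2 * k ^ 2) - R) / r := by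
    field_simp
    linear_combination hR2 - (h ^ 2 + 4 * k ^ 2) * hr2
  exact_mod_cast congrArg (Complex.ofReal) hreal
end
end

section
/- (Zero-knowledge of the X₁X₂ measurement.) Fix θ ∈ ℝ. For every real number v, the set {(k,h) ∈ ℝ² : k > 0, h > 0, and Tr[ρ_QET(k,h,θ)·(X⊗X)] = v} is uncountable whenever it is nonempty. -/
open Matrix Kronecker
open scoped ComplexOrder

noncomputable section

lemma ratio_scale (t k h : ℝ) (ht : 0 < t) :
    t * h / Real.sqrt ((t * h) ^ 2 + (t * k) ^ 2) = h / Real.sqrt (h ^ 2 + k ^ 2) := by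
  have h1 : (t * h) ^ 2 + (t * k) ^ 2 = t ^ 2 * (h ^ 2 + k ^ 2) := by ring
  rw [h1, Real.sqrt_mul (by positivity), Real.sqrt_sq ht.le,
    mul_div_mul_left _ _ ht.ne']

lemma gs_scale (t k h : ℝ) (ht : 0 < t) : gs (t * k) (t * h) = gs k h := by
  funext p
  simp only [gs, ratio_scale t k h ht]

lemma rho_scale (t k h θ : ℝ) (ht : 0 < t) :
    ρQET (t * k) (t * h) θ = ρQET k h θ := by
  simp only [ρQET, gProj, gs_scale t k h ht]

lemma not_countable_Ioi : ¬ (Set.Ioi (0:ℝ)).Countable := by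
  intro hc
  have := Cardinal.mk_Ioi_real 0
  have hc2 := hc.le_aleph0
  rw [this] at hc2
  exact absurd hc2 (not_le.mpr Cardinal.aleph0_lt_continuum)

/-- Zero-knowledge of the X₁X₂ measurement: each attained value of
`Tr[ρ_QET(k,h,θ)·(X⊗X)]` has an uncountable preimage in the open positive quadrant
(points are `p = (k, h)`). -/
theorem qet_XX_zero_knowledge (θ : ℝ) (v : ℝ)
    (hne : {p : ℝ × ℝ | 0 < p.1 ∧ 0 < p.2 ∧
      (ρQET p.1 p.2 θ * XX).trace = (v : ℂ)}.Nonempty) :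
    ¬ {p : ℝ × ℝ | 0 < p.1 ∧ 0 < p.2 ∧
      (ρQET p.1 p.2 θ * XX).trace = (v : ℂ)}.Countable := by
  intro hC
  obtain ⟨⟨k, h⟩, hk, hh, htr⟩ := hne
  set f : ℝ → ℝ × ℝ := fun t => (t * k, t * h) with hf
  have finj : Function.Injective f := by
    intro a b hab
    have : a * k = b * k := congrArg Prod.fst hab
    exact mul_right_cancel₀ hk.ne' this
  have hsub : Set.Ioi (0:ℝ) ⊆ f ⁻¹' {p : ℝ × ℝ | 0 < p.1 ∧ 0 < p.2 ∧
      (ρQET p.1 p.2 θ * XX).trace = (v : ℂ)} := by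
    intro t ht
    refine ⟨mul_pos ht hk, mul_pos ht hh, ?_⟩
    simp only [f]
    rw [rho_scale t k h θ ht, htr]
  exact not_countable_Ioi ((hC.preimage finj).mono hsub)
end
end

section
/- For all θ ∈ ℝ and all μ, ν ∈ {−1,+1}, the expectation value of Bob's single-qubit Hamiltonian in the normalized post-measurement state with the verifier applying U_B(ν,θ) after the prover measured outcome μ satisfies Tr[ρ(μ,ν,θ)·H₂] = (h/√(h²+k²))·[μν·k·sin 2θ + h·(1 − cos 2θ)]. -/
open Matrix Kronecker
open scoped ComplexOrder

noncomputable section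

def w4 (x y z t : ℂ) : (Fin 2 × Fin 2) → ℂ := fun p => !![x, y; z, t] p.1 p.2

lemma trace_rank_one (A B : M4) (v w : (Fin 2 × Fin 2) → ℂ) :
    (A * Matrix.vecMulVec v w * B).trace = dotProduct w ((B * A).mulVec v) := by
  rw [Matrix.trace_mul_comm, ← Matrix.mul_assoc, Matrix.trace_mul_comm]
  simp only [Matrix.trace, Matrix.diag, Matrix.mul_apply, Matrix.vecMulVec_apply,
    Matrix.mulVec, dotProduct, Finset.mul_sum]
  rw [Finset.sum_comm]
  exact Finset.sum_congr rfl fun p _ => Finset.sum_congr rfl fun q _ => by rw [Finset.sum_mul, Finset.mul_sum]; exact Finset.sum_congr rfl fun _ _ => by ring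

lemma gs_eq (k h : ℝ) : gs k h =
    w4 ((1 / Real.sqrt 2 * Real.sqrt (1 - h / Real.sqrt (h ^ 2 + k ^ 2)) : ℝ) : ℂ) 0 0
       (-((1 / Real.sqrt 2 * Real.sqrt (1 + h / Real.sqrt (h ^ 2 + k ^ 2)) : ℝ) : ℂ)) := by
  funext p
  obtain ⟨i, j⟩ := p
  fin_cases i <;> fin_cases j <;>
    simp [gs, e00, e11, w4, Prod.ext_iff] <;> ring

lemma PA_mulVec (μ : ℝ) (x y z t : ℂ) :
    (PA μ).mulVec (w4 x y z t) =
      w4 ((x + μ * z) / 2) ((y + μ * t) / 2) ((μ * x + z) / 2) ((μ * y + t) / 2) := by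
  funext p
  obtain ⟨i, j⟩ := p
  fin_cases i <;> fin_cases j <;>
    simp [PA, X1, σx, w4, Matrix.mulVec, dotProduct, Fintype.sum_prod_type,
      Fin.sum_univ_two, Matrix.kroneckerMap_apply, Matrix.one_apply, Prod.ext_iff] <;>
    first
    | exact Or.inl (by ring)
    | ring

lemma UB_mulVec (ν θ : ℝ) (x y z t : ℂ) :
    (UB ν θ).mulVec (w4 x y z t) =
      w4 (Real.cos θ * x - ν * Real.sin θ * y) (Real.cos θ * y + ν * Real.sin θ * x)
         (Real.cos θ * z - ν * Real.sin θ * t) (Real.cos θ * t + ν * Real.sin θ * z) := by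
  funext p
  obtain ⟨i, j⟩ := p
  fin_cases i <;> fin_cases j <;>
    simp [UB, Y2, σy, w4, Matrix.mulVec, dotProduct, Fintype.sum_prod_type,
      Fin.sum_univ_two, Matrix.kroneckerMap_apply, Matrix.one_apply, Prod.ext_iff] <;>
    first
    | exact Or.inl (by ring)
    | (ring_nf; simp only [Complex.I_sq]; push_cast; ring)
    | ring

lemma UBH_mulVec (ν θ : ℝ) (x y z t : ℂ) :
    ((UB ν θ)ᴴ).mulVec (w4 x y z t) =
      w4 (Real.cos θ * x + ν * Real.sin θ * y) (Real.cos θ * y - ν * Real.sin θ * x)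
         (Real.cos θ * z + ν * Real.sin θ * t) (Real.cos θ * t - ν * Real.sin θ * z) := by
  funext p
  obtain ⟨i, j⟩ := p
  fin_cases i <;> fin_cases j <;>
    simp [UB, Y2, σy, w4, Matrix.mulVec, dotProduct, Fintype.sum_prod_type,
      Fin.sum_univ_two, Matrix.kroneckerMap_apply, Matrix.one_apply,
      Matrix.conjTranspose_apply, ← Complex.cos_conj, ← Complex.sin_conj, Complex.conj_ofReal, Prod.ext_iff] <;>
    first
    | exact Or.inl (by ring)
    | (ring_nf; simp only [Complex.I_sq]; push_cast; ring)
    | ring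

lemma H2_mulVec (k h : ℝ) (x y z t : ℂ) :
    (H2m k h).mulVec (w4 x y z t) =
      w4 ((h + (h ^ 2 / Real.sqrt (h ^ 2 + k ^ 2) : ℝ)) * x)
         (((h ^ 2 / Real.sqrt (h ^ 2 + k ^ 2) : ℝ) - h) * y)
         ((h + (h ^ 2 / Real.sqrt (h ^ 2 + k ^ 2) : ℝ)) * z)
         (((h ^ 2 / Real.sqrt (h ^ 2 + k ^ 2) : ℝ) - h) * t) := by
  funext p
  obtain ⟨i, j⟩ := p
  fin_cases i <;> fin_cases j <;>
    simp [H2m, Z2, σz, w4, Matrix.mulVec, dotProduct, Fintype.sum_prod_type,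
      Fin.sum_univ_two, Matrix.kroneckerMap_apply, Matrix.one_apply, Prod.ext_iff] <;>
    first
    | exact Or.inl (by ring)
    | ring

lemma dot_star_w4 (x y z t x' y' z' t' : ℂ) :
    dotProduct (star (w4 x y z t)) (w4 x' y' z' t') =
      star x * x' + star y * y' + star z * z' + star t * t' := by
  simp [dotProduct, Fintype.sum_prod_type, Fin.sum_univ_two, w4]
  ring

example : True := trivial

set_option maxHeartbeats 1000000 in
/-- `Tr[ρ(μ,ν,θ)·H₂] = (h/√(h²+k²))·[μν·k·sin 2θ + h·(1 − cos 2θ)]`. -/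
theorem qet_H2_expectation_mu_nu (k h : ℝ) (hk : 0 < k) (hh : 0 < h) (θ : ℝ)
    (μ ν : ℝ) (hμ : μ ∈ ({-1, 1} : Set ℝ)) (hν : ν ∈ ({-1, 1} : Set ℝ)) :
    (ρMN k h μ ν θ * H2m k h).trace =
      ((h / Real.sqrt (h ^ 2 + k ^ 2) *
        (μ * ν * k * Real.sin (2 * θ) + h * (1 - Real.cos (2 * θ))) : ℝ) : ℂ) := by
  have hA : ρMN k h μ ν θ * H2m k h =
      (2 : ℂ) • (UB ν θ * PA μ * Matrix.vecMulVec (gs k h) (star (gs k h)) *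
        (PA μ * (UB ν θ)ᴴ * H2m k h)) := by
    simp [ρMN, gProj, Matrix.smul_mul, Matrix.mul_assoc]
  rw [hA, Matrix.trace_smul, trace_rank_one]
  rw [show PA μ * (UB ν θ)ᴴ * H2m k h * (UB ν θ * PA μ)
      = PA μ * ((UB ν θ)ᴴ * (H2m k h * (UB ν θ * PA μ))) by
    simp [Matrix.mul_assoc]]
  rw [← Matrix.mulVec_mulVec, ← Matrix.mulVec_mulVec, ← Matrix.mulVec_mulVec,
    ← Matrix.mulVec_mulVec, gs_eq k h, PA_mulVec, UB_mulVec, H2_mulVec, UBH_mulVec,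
    PA_mulVec, dot_star_w4]
  simp only [star_zero, star_neg, Complex.star_def, Complex.conj_ofReal, zero_mul, mul_zero,
    add_zero, zero_add]
  set r := Real.sqrt (h ^ 2 + k ^ 2) with hr
  have hr0 : 0 < r := Real.sqrt_pos.mpr (by positivity)
  have hhr : h ≤ r := by
    rw [hr]
    calc h = Real.sqrt (h ^ 2) := by rw [Real.sqrt_sq hh.le]
    _ ≤ Real.sqrt (h ^ 2 + k ^ 2) := Real.sqrt_le_sqrt (by nlinarith)
  have hr2 : r ^ 2 = h ^ 2 + k ^ 2 := Real.sq_sqrt (by positivity)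
  set a : ℝ := 1 / Real.sqrt 2 * Real.sqrt (1 - h / r) with ha
  set b : ℝ := 1 / Real.sqrt 2 * Real.sqrt (1 + h / r) with hb
  have h1m : (0:ℝ) ≤ 1 - h / r := by
    rw [sub_nonneg, div_le_one hr0]; exact hhr
  have h1p : (0:ℝ) ≤ 1 + h / r := by positivity
  have ha2 : a ^ 2 = (1 - h / r) / 2 := by
    rw [ha, mul_pow, Real.sq_sqrt h1m, div_pow, Real.sq_sqrt (by norm_num), one_pow]
    ring
  have hb2 : b ^ 2 = (1 + h / r) / 2 := by
    rw [hb, mul_pow, Real.sq_sqrt h1p, div_pow, Real.sq_sqrt (by norm_num), one_pow]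
    ring
  have hab : a * b = k / (2 * r) := by
    rw [ha, hb]
    rw [show (1 / Real.sqrt 2 * Real.sqrt (1 - h / r)) * (1 / Real.sqrt 2 * Real.sqrt (1 + h / r))
        = (Real.sqrt (1 - h / r) * Real.sqrt (1 + h / r)) / (Real.sqrt 2 * Real.sqrt 2) by ring]
    rw [Real.mul_self_sqrt (by norm_num), ← Real.sqrt_mul h1m]
    rw [show (1 - h / r) * (1 + h / r) = (r ^ 2 - h ^ 2) / r ^ 2 by field_simp; ring]
    rw [show r ^ 2 - h ^ 2 = k ^ 2 by rw [hr2]; ring]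
    rw [show k ^ 2 / r ^ 2 = (k / r) ^ 2 by ring, Real.sqrt_sq (by positivity)]
    ring
  have ha2' := congrArg (Complex.ofReal) ha2
  have hb2' := congrArg (Complex.ofReal) hb2
  have hab' := congrArg (Complex.ofReal) hab
  have hs' := congrArg (Complex.ofReal) (Real.sin_sq_add_cos_sq θ)
  push_cast at ha2' hb2' hab' hs'
  simp only [Set.mem_insert_iff, Set.mem_singleton_iff] at hμ hν
  rcases hμ with rfl | rfl <;> rcases hν with rfl | rfl <;>
    (rw [Real.sin_two_mul, Real.cos_two_mul]; push_cast; simp only [smul_eq_mul]) <;>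
  first
  | linear_combination (((h:ℂ) + (h:ℂ)^2/(r:ℂ)) * (Complex.cos (θ:ℂ))^2 + ((h:ℂ)^2/(r:ℂ) - (h:ℂ)) * (Complex.sin (θ:ℂ))^2) * ha2'
      + (((h:ℂ) + (h:ℂ)^2/(r:ℂ)) * (Complex.sin (θ:ℂ))^2 + ((h:ℂ)^2/(r:ℂ) - (h:ℂ)) * (Complex.cos (θ:ℂ))^2) * hb2'
      + (4*(h:ℂ)*(Complex.cos (θ:ℂ))*(Complex.sin (θ:ℂ))) * hab'
      + (2*(h:ℂ)^2/(r:ℂ)) * hs'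
  | linear_combination (((h:ℂ) + (h:ℂ)^2/(r:ℂ)) * (Complex.cos (θ:ℂ))^2 + ((h:ℂ)^2/(r:ℂ) - (h:ℂ)) * (Complex.sin (θ:ℂ))^2) * ha2'
      + (((h:ℂ) + (h:ℂ)^2/(r:ℂ)) * (Complex.sin (θ:ℂ))^2 + ((h:ℂ)^2/(r:ℂ) - (h:ℂ)) * (Complex.cos (θ:ℂ))^2) * hb2'
      + (-4*(h:ℂ)*(Complex.cos (θ:ℂ))*(Complex.sin (θ:ℂ))) * hab'
      + (2*(h:ℂ)^2/(r:ℂ)) * hs'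
end
end

section
/- For all θ ∈ ℝ and all μ, ν ∈ {−1,+1}, the expectation value of the interaction term in the normalized post-measurement state satisfies Tr[ρ(μ,ν,θ)·V] = (2k/√(h²+k²))·[−μν·h·sin 2θ + k·(1 − cos 2θ)]. -/
open Matrix Kronecker
open scoped ComplexOrder

noncomputable section

lemma trace_key (A B : M4) (x y : (Fin 2 × Fin 2) → ℂ) :
    (A * Matrix.vecMulVec x y * B).trace = (y ᵥ* (B * A)) ⬝ᵥ x := by
  simp only [Matrix.trace, Matrix.diag, Matrix.mul_apply, Matrix.vecMulVec_apply,
    dotProduct, Matrix.vecMul, Fintype.sum_prod_type, Fin.sum_univ_two]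
  ring

set_option maxHeartbeats 2000000 in
/-- `Tr[ρ(μ,ν,θ)·V] = (2k/√(h²+k²))·[−μν·h·sin 2θ + k·(1 − cos 2θ)]`. -/
theorem qet_V_expectation_mu_nu (k h : ℝ) (hk : 0 < k) (hh : 0 < h) (θ : ℝ)
    (μ ν : ℝ) (hμ : μ ∈ ({-1, 1} : Set ℝ)) (hν : ν ∈ ({-1, 1} : Set ℝ)) :
    (ρMN k h μ ν θ * Vm k h).trace =
      ((2 * k / Real.sqrt (h ^ 2 + k ^ 2) *
        (-(μ * ν * h) * Real.sin (2 * θ) + k * (1 - Real.cos (2 * θ))) : ℝ) : ℂ) := by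
  have hr0 : (0:ℝ) < Real.sqrt (h ^ 2 + k ^ 2) := Real.sqrt_pos.mpr (by positivity)
  have hr2 : (Real.sqrt (h ^ 2 + k ^ 2)) ^ 2 = h ^ 2 + k ^ 2 := Real.sq_sqrt (by positivity)
  have hle : h / Real.sqrt (h ^ 2 + k ^ 2) ≤ 1 := by
    rw [div_le_one hr0]
    nlinarith [hr0, hr2]
  have hge : (0:ℝ) ≤ h / Real.sqrt (h ^ 2 + k ^ 2) := by positivity
  have hAr : (Real.sqrt (1 - h / Real.sqrt (h ^ 2 + k ^ 2))) ^ 2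
      = 1 - h / Real.sqrt (h ^ 2 + k ^ 2) := Real.sq_sqrt (by linarith)
  have hBr : (Real.sqrt (1 + h / Real.sqrt (h ^ 2 + k ^ 2))) ^ 2
      = 1 + h / Real.sqrt (h ^ 2 + k ^ 2) := Real.sq_sqrt (by linarith)
  have hABr : Real.sqrt (1 - h / Real.sqrt (h ^ 2 + k ^ 2))
      * Real.sqrt (1 + h / Real.sqrt (h ^ 2 + k ^ 2)) = k / Real.sqrt (h ^ 2 + k ^ 2) := by
    rw [← Real.sqrt_mul (by linarith)]
    rw [show (1 - h / Real.sqrt (h ^ 2 + k ^ 2)) * (1 + h / Real.sqrt (h ^ 2 + k ^ 2))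
        = (k / Real.sqrt (h ^ 2 + k ^ 2)) ^ 2 by
      field_simp
      nlinarith [hr2]]
    exact Real.sqrt_sq (by positivity)
  have hA : ((Real.sqrt (1 - h / Real.sqrt (h ^ 2 + k ^ 2)) : ℝ) : ℂ) ^ 2
      = 1 - (h:ℂ) / ((Real.sqrt (h ^ 2 + k ^ 2) : ℂ)) := by
    rw [← Complex.ofReal_pow, hAr]; push_cast; ring
  have hB : ((Real.sqrt (1 + h / Real.sqrt (h ^ 2 + k ^ 2)) : ℝ) : ℂ) ^ 2
      = 1 + (h:ℂ) / ((Real.sqrt (h ^ 2 + k ^ 2) : ℂ)) := by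
    rw [← Complex.ofReal_pow, hBr]; push_cast; ring
  have hAB : ((Real.sqrt (1 - h / Real.sqrt (h ^ 2 + k ^ 2)) : ℝ) : ℂ)
      * ((Real.sqrt (1 + h / Real.sqrt (h ^ 2 + k ^ 2)) : ℝ) : ℂ)
      = (k:ℂ) / ((Real.sqrt (h ^ 2 + k ^ 2) : ℂ)) := by
    rw [← Complex.ofReal_mul, hABr]; push_cast; ring
  have hw : (((Real.sqrt 2 : ℂ))⁻¹) ^ 2 = 1 / 2 := by
    rw [inv_pow, ← Complex.ofReal_pow, Real.sq_sqrt (by norm_num : (0:ℝ) ≤ 2)]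
    norm_num
  simp only [Set.mem_insert_iff, Set.mem_singleton_iff] at hμ hν
  have hmu : (μ:ℂ) ^ 2 = 1 := by rcases hμ with rfl | rfl <;> norm_num
  have hnu : (ν:ℂ) ^ 2 = 1 := by rcases hν with rfl | rfl <;> norm_num
  have hI : Complex.I ^ 2 = -1 := Complex.I_sq
  have hS2 : Complex.sin (2 * (θ:ℂ)) = 2 * Complex.sin (θ:ℂ) * Complex.cos (θ:ℂ) :=
    Complex.sin_two_mul (θ:ℂ)
  have hC2 : Complex.cos (2 * (θ:ℂ)) = 2 * Complex.cos (θ:ℂ) ^ 2 - 1 :=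
    Complex.cos_two_mul (θ:ℂ)
  have hs : Complex.sin (θ:ℂ) ^ 2 = 1 - Complex.cos (θ:ℂ) ^ 2 := Complex.sin_sq (θ:ℂ)
  have h1 : ρMN k h μ ν θ * Vm k h
      = (2:ℂ) • ((UB ν θ * PA μ) * gProj k h * (PA μ * ((UB ν θ)ᴴ * Vm k h))) := by
    simp only [ρMN, Matrix.smul_mul, mul_assoc]
  rw [h1, Matrix.trace_smul, gProj, trace_key]
  simp only [dotProduct, Matrix.vecMul, Matrix.mul_apply, Fintype.sum_prod_type,
    Fin.sum_univ_two, gs, e00, e11, PA, UB, Vm, X1, Y2, XX, σx, σy,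
    Matrix.conjTranspose_apply, Matrix.add_apply, Matrix.sub_apply, Matrix.smul_apply,
    Matrix.one_apply, Matrix.kroneckerMap_apply, Matrix.of_apply, Matrix.cons_val',
    Matrix.cons_val_zero, Matrix.cons_val_one, Matrix.head_cons, Matrix.head_fin_const,
    Matrix.empty_val', Matrix.cons_val_fin_one, Pi.star_apply, smul_eq_mul,
    Prod.mk.injEq, star_sub, star_mul', Complex.star_def, _root_.map_mul, _root_.map_one,
    _root_.map_zero, Complex.conj_ofReal, Complex.conj_I, mul_one, mul_zero, one_mul,
    zero_mul, sub_zero, zero_sub, add_zero, zero_add, if_true, if_false]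
  norm_num
  linear_combination
    ((-1 : ℂ) * (ν:ℂ)^2 * ((Real.sqrt 2 : ℂ))⁻¹^2 * ((Real.sqrt (1 + h / Real.sqrt (h ^ 2 + k ^ 2)) : ℝ) : ℂ)^2 * Complex.sin (θ:ℂ)^2 * (k:ℂ)^2 * ((Real.sqrt (h ^ 2 + k ^ 2) : ℂ))⁻¹ + (-2 : ℂ) * (ν:ℂ)^2 * ((Real.sqrt 2 : ℂ))⁻¹^2 * ((Real.sqrt (1 - h / Real.sqrt (h ^ 2 + k ^ 2)) : ℝ) : ℂ) * ((Real.sqrt (1 + h / Real.sqrt (h ^ 2 + k ^ 2)) : ℝ) : ℂ) * Complex.sin (θ:ℂ)^2 * (k:ℂ) + (-1 : ℂ) * (ν:ℂ)^2 * ((Real.sqrt 2 : ℂ))⁻¹^2 * ((Real.sqrt (1 - h / Real.sqrt (h ^ 2 + k ^ 2)) : ℝ) : ℂ)^2 * Complex.sin (θ:ℂ)^2 * (k:ℂ)^2 * ((Real.sqrt (h ^ 2 + k ^ 2) : ℂ))⁻¹ + (4 : ℂ) * (μ:ℂ) * (ν:ℂ) * ((Real.sqrt 2 : ℂ))⁻¹^2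 * ((Real.sqrt (1 + h / Real.sqrt (h ^ 2 + k ^ 2)) : ℝ) : ℂ)^2 * Complex.sin (θ:ℂ) * Complex.cos (θ:ℂ) * (k:ℂ) + (-4 : ℂ) * (μ:ℂ) * (ν:ℂ) * ((Real.sqrt 2 : ℂ))⁻¹^2 * ((Real.sqrt (1 - h / Real.sqrt (h ^ 2 + k ^ 2)) : ℝ) : ℂ)^2 * Complex.sin (θ:ℂ) * Complex.cos (θ:ℂ) * (k:ℂ) + (-1 : ℂ) * (μ:ℂ)^2 * (ν:ℂ)^2 * ((Real.sqrt 2 : ℂ))⁻¹^2 * ((Real.sqrt (1 + h / Real.sqrt (h ^ 2 + k ^ 2)) : ℝ) : ℂ)^2 * Complex.sin (θ:ℂ)^2 * (k:ℂ)^2 * ((Real.sqrt (h ^ 2 + k ^ 2) : ℂ))⁻¹ + (-2 : ℂ) * (μ:ℂ)^2 * (ν:ℂ)^2 * ((Real.sqrt 2 : ℂ))⁻¹^2 * ((Real.sqrt (1 - h / Real.sqrt (h ^ 2 + k ^ 2)) : ℝ) : ℂ) * ((Real.sqrt (1 + h / Real.sqrt (h ^ 2 + k ^ 2)) : ℝ)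 : ℂ) * Complex.sin (θ:ℂ)^2 * (k:ℂ) + (-1 : ℂ) * (μ:ℂ)^2 * (ν:ℂ)^2 * ((Real.sqrt 2 : ℂ))⁻¹^2 * ((Real.sqrt (1 - h / Real.sqrt (h ^ 2 + k ^ 2)) : ℝ) : ℂ)^2 * Complex.sin (θ:ℂ)^2 * (k:ℂ)^2 * ((Real.sqrt (h ^ 2 + k ^ 2) : ℂ))⁻¹ + (1 : ℂ) * Complex.I^2 * (ν:ℂ)^2 * ((Real.sqrt 2 : ℂ))⁻¹^2 * ((Real.sqrt (1 + h / Real.sqrt (h ^ 2 + k ^ 2)) : ℝ) : ℂ)^2 * Complex.sin (θ:ℂ)^2 * (k:ℂ)^2 * ((Real.sqrt (h ^ 2 + k ^ 2) : ℂ))⁻¹ + (2 : ℂ) * Complex.I^2 * (ν:ℂ)^2 * ((Real.sqrt 2 : ℂ))⁻¹^2 * ((Real.sqrt (1 - h / Real.sqrt (h ^ 2 + k ^ 2)) : ℝ) : ℂ) * ((Real.sqrt (1 + h / Real.sqrt (h ^ 2 + k ^ 2)) : ℝ) : ℂ) * Complex.sin (θ:ℂ)^2 * (k:ℂ) + (1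 : ℂ) * Complex.I^2 * (ν:ℂ)^2 * ((Real.sqrt 2 : ℂ))⁻¹^2 * ((Real.sqrt (1 - h / Real.sqrt (h ^ 2 + k ^ 2)) : ℝ) : ℂ)^2 * Complex.sin (θ:ℂ)^2 * (k:ℂ)^2 * ((Real.sqrt (h ^ 2 + k ^ 2) : ℂ))⁻¹ + (1 : ℂ) * Complex.I^2 * (μ:ℂ)^2 * (ν:ℂ)^2 * ((Real.sqrt 2 : ℂ))⁻¹^2 * ((Real.sqrt (1 + h / Real.sqrt (h ^ 2 + k ^ 2)) : ℝ) : ℂ)^2 * Complex.sin (θ:ℂ)^2 * (k:ℂ)^2 * ((Real.sqrt (h ^ 2 + k ^ 2) : ℂ))⁻¹ + (2 : ℂ) * Complex.I^2 * (μ:ℂ)^2 * (ν:ℂ)^2 * ((Real.sqrt 2 : ℂ))⁻¹^2 * ((Real.sqrt (1 - h / Real.sqrt (h ^ 2 + k ^ 2)) : ℝ) : ℂ) * ((Real.sqrt (1 + h / Real.sqrt (h ^ 2 + k ^ 2)) : ℝ) : ℂ) * Complex.sin (θ:ℂ)^2 * (k:ℂ) + (1 : ℂ) * Complex.I^2 *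 (μ:ℂ)^2 * (ν:ℂ)^2 * ((Real.sqrt 2 : ℂ))⁻¹^2 * ((Real.sqrt (1 - h / Real.sqrt (h ^ 2 + k ^ 2)) : ℝ) : ℂ)^2 * Complex.sin (θ:ℂ)^2 * (k:ℂ)^2 * ((Real.sqrt (h ^ 2 + k ^ 2) : ℂ))⁻¹) * hI
    + ((1 : ℂ) * ((Real.sqrt 2 : ℂ))⁻¹^2 * ((Real.sqrt (1 + h / Real.sqrt (h ^ 2 + k ^ 2)) : ℝ) : ℂ)^2 * Complex.cos (θ:ℂ)^2 * (k:ℂ)^2 * ((Real.sqrt (h ^ 2 + k ^ 2) : ℂ))⁻¹ + (-2 : ℂ) * ((Real.sqrt 2 : ℂ))⁻¹^2 * ((Real.sqrt (1 - h / Real.sqrt (h ^ 2 + k ^ 2)) : ℝ) : ℂ) * ((Real.sqrt (1 + h / Real.sqrt (h ^ 2 + k ^ 2)) : ℝ) : ℂ) * Complex.cos (θ:ℂ)^2 * (k:ℂ) + (1 : ℂ) * ((Real.sqrt 2 : ℂ))⁻¹^2 * ((Real.sqrt (1 - h / Real.sqrt (h ^ 2 + k ^ 2)) : ℝ) : ℂ)^2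 * Complex.cos (θ:ℂ)^2 * (k:ℂ)^2 * ((Real.sqrt (h ^ 2 + k ^ 2) : ℂ))⁻¹ + (1 : ℂ) * (ν:ℂ)^2 * ((Real.sqrt 2 : ℂ))⁻¹^2 * ((Real.sqrt (1 + h / Real.sqrt (h ^ 2 + k ^ 2)) : ℝ) : ℂ)^2 * Complex.sin (θ:ℂ)^2 * (k:ℂ)^2 * ((Real.sqrt (h ^ 2 + k ^ 2) : ℂ))⁻¹ + (2 : ℂ) * (ν:ℂ)^2 * ((Real.sqrt 2 : ℂ))⁻¹^2 * ((Real.sqrt (1 - h / Real.sqrt (h ^ 2 + k ^ 2)) : ℝ) : ℂ) * ((Real.sqrt (1 + h / Real.sqrt (h ^ 2 + k ^ 2)) : ℝ) : ℂ) * Complex.sin (θ:ℂ)^2 * (k:ℂ) + (1 : ℂ) * (ν:ℂ)^2 * ((Real.sqrt 2 : ℂ))⁻¹^2 * ((Real.sqrt (1 - h / Real.sqrt (h ^ 2 + k ^ 2)) : ℝ) : ℂ)^2 * Complex.sin (θ:ℂ)^2 * (k:ℂ)^2 * ((Real.sqrt (h ^ 2 + k ^ 2) : ℂ))⁻¹)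 * hmu
    + ((2 : ℂ) * ((Real.sqrt 2 : ℂ))⁻¹^2 * ((Real.sqrt (1 + h / Real.sqrt (h ^ 2 + k ^ 2)) : ℝ) : ℂ)^2 * Complex.sin (θ:ℂ)^2 * (k:ℂ)^2 * ((Real.sqrt (h ^ 2 + k ^ 2) : ℂ))⁻¹ + (4 : ℂ) * ((Real.sqrt 2 : ℂ))⁻¹^2 * ((Real.sqrt (1 - h / Real.sqrt (h ^ 2 + k ^ 2)) : ℝ) : ℂ) * ((Real.sqrt (1 + h / Real.sqrt (h ^ 2 + k ^ 2)) : ℝ) : ℂ) * Complex.sin (θ:ℂ)^2 * (k:ℂ) + (2 : ℂ) * ((Real.sqrt 2 : ℂ))⁻¹^2 * ((Real.sqrt (1 - h / Real.sqrt (h ^ 2 + k ^ 2)) : ℝ) : ℂ)^2 * Complex.sin (θ:ℂ)^2 * (k:ℂ)^2 * ((Real.sqrt (h ^ 2 + k ^ 2) : ℂ))⁻¹) * hnu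
    + ((2 : ℂ) * ((Real.sqrt (1 + h / Real.sqrt (h ^ 2 + k ^ 2)) : ℝ) : ℂ)^2 * Complex.cos (θ:ℂ)^2 * (k:ℂ)^2 * ((Real.sqrt (h ^ 2 + k ^ 2) : ℂ))⁻¹ + (2 : ℂ) * ((Real.sqrt (1 + h / Real.sqrt (h ^ 2 + k ^ 2)) : ℝ) : ℂ)^2 * Complex.sin (θ:ℂ)^2 * (k:ℂ)^2 * ((Real.sqrt (h ^ 2 + k ^ 2) : ℂ))⁻¹ + (-4 : ℂ) * ((Real.sqrt (1 - h / Real.sqrt (h ^ 2 + k ^ 2)) : ℝ) : ℂ) * ((Real.sqrt (1 + h / Real.sqrt (h ^ 2 + k ^ 2)) : ℝ) : ℂ) * Complex.cos (θ:ℂ)^2 * (k:ℂ) + (4 : ℂ) * ((Real.sqrt (1 - h / Real.sqrt (h ^ 2 + k ^ 2)) : ℝ) : ℂ) * ((Real.sqrt (1 + h / Real.sqrt (h ^ 2 + k ^ 2)) : ℝ) : ℂ) * Complex.sin (θ:ℂ)^2 * (k:ℂ) + (2 : ℂ) * ((Real.sqrt (1 - h / Real.sqrt (h ^ 2 + k ^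 2)) : ℝ) : ℂ)^2 * Complex.cos (θ:ℂ)^2 * (k:ℂ)^2 * ((Real.sqrt (h ^ 2 + k ^ 2) : ℂ))⁻¹ + (2 : ℂ) * ((Real.sqrt (1 - h / Real.sqrt (h ^ 2 + k ^ 2)) : ℝ) : ℂ)^2 * Complex.sin (θ:ℂ)^2 * (k:ℂ)^2 * ((Real.sqrt (h ^ 2 + k ^ 2) : ℂ))⁻¹ + (-4 : ℂ) * (μ:ℂ) * (ν:ℂ) * ((Real.sqrt (1 + h / Real.sqrt (h ^ 2 + k ^ 2)) : ℝ) : ℂ)^2 * Complex.sin (θ:ℂ) * Complex.cos (θ:ℂ) * (k:ℂ) + (4 : ℂ) * (μ:ℂ) * (ν:ℂ) * ((Real.sqrt (1 - h / Real.sqrt (h ^ 2 + k ^ 2)) : ℝ) : ℂ)^2 * Complex.sin (θ:ℂ) * Complex.cos (θ:ℂ) * (k:ℂ)) * hw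
    + ((1 : ℂ) * Complex.cos (θ:ℂ)^2 * (k:ℂ)^2 * ((Real.sqrt (h ^ 2 + k ^ 2) : ℂ))⁻¹ + (1 : ℂ) * Complex.sin (θ:ℂ)^2 * (k:ℂ)^2 * ((Real.sqrt (h ^ 2 + k ^ 2) : ℂ))⁻¹ + (2 : ℂ) * (μ:ℂ) * (ν:ℂ) * Complex.sin (θ:ℂ) * Complex.cos (θ:ℂ) * (k:ℂ)) * hA
    + ((1 : ℂ) * Complex.cos (θ:ℂ)^2 * (k:ℂ)^2 * ((Real.sqrt (h ^ 2 + k ^ 2) : ℂ))⁻¹ + (1 : ℂ) * Complex.sin (θ:ℂ)^2 * (k:ℂ)^2 * ((Real.sqrt (h ^ 2 + k ^ 2) : ℂ))⁻¹ + (-2 : ℂ) * (μ:ℂ) * (ν:ℂ) * Complex.sin (θ:ℂ) * Complex.cos (θ:ℂ) * (k:ℂ)) * hB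
    + ((-2 : ℂ) * Complex.cos (θ:ℂ)^2 * (k:ℂ) + (2 : ℂ) * Complex.sin (θ:ℂ)^2 * (k:ℂ)) * hAB
    + ((2 : ℂ) * (μ:ℂ) * (ν:ℂ) * (k:ℂ) * (h:ℂ) * ((Real.sqrt (h ^ 2 + k ^ 2) : ℂ))⁻¹) * hS2
    + ((2 : ℂ) * (k:ℂ)^2 * ((Real.sqrt (h ^ 2 + k ^ 2) : ℂ))⁻¹) * hC2
    + ((4 : ℂ) * (k:ℂ)^2 * ((Real.sqrt (h ^ 2 + k ^ 2) : ℂ))⁻¹) * hs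
end
end

section
/- For all θ ∈ ℝ and all μ, ν ∈ {−1,+1}, Bob's expected local energy in the normalized post-measurement state satisfies Tr[ρ(μ,ν,θ)·(H₂ + V)] = (1/√(h²+k²))·[−μν·h·k·sin 2θ + (h² + 2k²)·(1 − cos 2θ)]. -/
open Matrix Kronecker
open scoped ComplexOrder

noncomputable section

lemma trace_rankone' {n : Type*} [Fintype n] (A B : Matrix n n ℂ) (u v : n → ℂ) :
    (A * Matrix.vecMulVec u v * B).trace = v ⬝ᵥ ((B * A) *ᵥ u) := by
  rw [Matrix.trace_mul_cycle]
  simp only [Matrix.trace, Matrix.diag, Matrix.mul_apply, Matrix.vecMulVec_apply,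
    Matrix.mulVec, dotProduct, Finset.mul_sum]
  refine Finset.sum_congr rfl fun j _ => Finset.sum_congr rfl fun i _ => ?_
  ring

set_option maxHeartbeats 4000000 in
set_option maxRecDepth 8000 in
/-- Bob's expected local energy:
`Tr[ρ(μ,ν,θ)·(H₂+V)] = (1/√(h²+k²))·[−μν·hk·sin 2θ + (h²+2k²)·(1 − cos 2θ)]`. -/
theorem qet_local_energy_expectation_mu_nu (k h : ℝ) (hk : 0 < k) (hh : 0 < h) (θ : ℝ)
    (μ ν : ℝ) (hμ : μ ∈ ({-1, 1} : Set ℝ)) (hν : ν ∈ ({-1, 1} : Set ℝ)) :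
    (ρMN k h μ ν θ * (H2m k h + Vm k h)).trace =
      ((1 / Real.sqrt (h ^ 2 + k ^ 2) *
        (-(μ * ν * h * k) * Real.sin (2 * θ) +
          (h ^ 2 + 2 * k ^ 2) * (1 - Real.cos (2 * θ))) : ℝ) : ℂ) := by
  have hr0 : 0 < Real.sqrt (h ^ 2 + k ^ 2) := Real.sqrt_pos.mpr (by positivity)
  have hrsq : Real.sqrt (h ^ 2 + k ^ 2) ^ 2 = h ^ 2 + k ^ 2 := Real.sq_sqrt (by positivity)
  have hle : h / Real.sqrt (h ^ 2 + k ^ 2) ≤ 1 := by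
    rw [div_le_one hr0]
    nlinarith [hrsq, hr0, sq_nonneg (h - Real.sqrt (h ^ 2 + k ^ 2))]
  have ha2r : Real.sqrt (1 - h / Real.sqrt (h ^ 2 + k ^ 2)) ^ 2
      = 1 - h / Real.sqrt (h ^ 2 + k ^ 2) := Real.sq_sqrt (by linarith)
  have hb2r : Real.sqrt (1 + h / Real.sqrt (h ^ 2 + k ^ 2)) ^ 2
      = 1 + h / Real.sqrt (h ^ 2 + k ^ 2) := Real.sq_sqrt (by positivity)
  have habr : Real.sqrt (1 - h / Real.sqrt (h ^ 2 + k ^ 2))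
        * Real.sqrt (1 + h / Real.sqrt (h ^ 2 + k ^ 2))
      = k / Real.sqrt (h ^ 2 + k ^ 2) := by
    rw [← Real.sqrt_mul (by linarith)]
    have harg : (1 - h / Real.sqrt (h ^ 2 + k ^ 2)) * (1 + h / Real.sqrt (h ^ 2 + k ^ 2))
        = (k / Real.sqrt (h ^ 2 + k ^ 2)) ^ 2 := by
      field_simp
      nlinarith [hrsq]
    rw [harg, Real.sqrt_sq (by positivity)]
  have ha2 : ((Real.sqrt (1 - h / Real.sqrt (h ^ 2 + k ^ 2)) : ℝ) : ℂ) ^ 2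
      = 1 - (h : ℂ) * ((Real.sqrt (h ^ 2 + k ^ 2) : ℝ) : ℂ)⁻¹ := by
    rw [← Complex.ofReal_pow, ha2r]; push_cast; ring
  have hb2 : ((Real.sqrt (1 + h / Real.sqrt (h ^ 2 + k ^ 2)) : ℝ) : ℂ) ^ 2
      = 1 + (h : ℂ) * ((Real.sqrt (h ^ 2 + k ^ 2) : ℝ) : ℂ)⁻¹ := by
    rw [← Complex.ofReal_pow, hb2r]; push_cast; ring
  have hab : ((Real.sqrt (1 - h / Real.sqrt (h ^ 2 + k ^ 2)) : ℝ) : ℂ)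
        * ((Real.sqrt (1 + h / Real.sqrt (h ^ 2 + k ^ 2)) : ℝ) : ℂ)
      = (k : ℂ) * ((Real.sqrt (h ^ 2 + k ^ 2) : ℝ) : ℂ)⁻¹ := by
    rw [← Complex.ofReal_mul, habr]; push_cast; ring
  have hQ2 : (((Real.sqrt 2 : ℝ) : ℂ))⁻¹ ^ 2 = 1 / 2 := by
    rw [inv_pow, ← Complex.ofReal_pow, Real.sq_sqrt (by norm_num : (0:ℝ) ≤ 2)]
    norm_num
  have hs2 : Complex.sin (θ : ℂ) ^ 2 = 1 - Complex.cos (θ : ℂ) ^ 2 := by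
    linear_combination Complex.sin_sq_add_cos_sq (θ : ℂ)
  have hmu : ((μ : ℝ) : ℂ) ^ 2 = 1 := by
    rcases hμ with h' | h' <;> simp_all
  have hnu : ((ν : ℝ) : ℂ) ^ 2 = 1 := by
    rcases hν with h' | h' <;> simp_all
  have hi2 : Complex.I ^ 2 = -1 := Complex.I_sq
  rw [Real.sin_two_mul, Real.cos_two_mul]
  have hrw : ρMN k h μ ν θ * (H2m k h + Vm k h)
      = (2 : ℂ) • ((UB ν θ * PA μ) * gProj k h * (PA μ * ((UB ν θ)ᴴ * (H2m k h + Vm k h)))) := by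
    rw [ρMN]
    simp only [Matrix.smul_mul, Matrix.mul_assoc]
  rw [hrw, Matrix.trace_smul, gProj, trace_rankone']
  simp (config := { decide := true }) only [dotProduct, Matrix.mulVec, gs, e00, e11, smul_eq_mul,
    Fintype.sum_prod_type, Fin.sum_univ_two, Pi.star_apply, star_sub, star_mul',
    Complex.star_def, Complex.conj_ofReal, _root_.map_one, _root_.map_zero, mul_ite, mul_one,
    mul_zero, ite_mul, zero_mul, one_mul, Prod.mk.injEq, and_true, true_and, and_false,
    false_and, if_true, if_false, sub_zero, zero_sub, add_zero, zero_add, star_zero, star_one]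
  have hC00 : (PA μ * ((UB ν θ)ᴴ * (H2m k h + Vm k h)) * (UB ν θ * PA μ)) (0, 0) (0, 0)
      = (-1/4 : ℂ) * (Complex.sin (θ : ℂ)) ^ 2 * ((ν : ℝ) : ℂ) ^ 2 * Complex.I ^ 4 * (h : ℂ) + (-1/4 : ℂ) * (Complex.sin (θ : ℂ)) ^ 2 * ((μ : ℝ) : ℂ) ^ 2 * ((ν : ℝ) : ℂ) ^ 2 * Complex.I ^ 4 * (h : ℂ) + (-2 : ℂ) * (Complex.cos (θ : ℂ)) * (Complex.sin (θ : ℂ)) * ((μ : ℝ) : ℂ) * ((ν : ℝ) : ℂ) * Complex.I ^ 2 * (k : ℂ) + (1/4 : ℂ) * (Complex.cos (θ : ℂ)) ^ 2 * (h : ℂ) + (1/4 : ℂ) * (Complex.cos (θ : ℂ)) ^ 2 * ((μ : ℝ) : ℂ) ^ 2 * (h : ℂ) + (1/2 : ℂ) * (((Real.sqrt (h ^ 2 + k ^ 2) : ℝ) : ℂ))⁻¹ * (Complex.sin (θ : ℂ)) ^ 2 * ((ν : ℝ) : ℂ) ^ 2 * Complex.I ^ 4 * (k : ℂ) ^ 2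 + (1/4 : ℂ) * (((Real.sqrt (h ^ 2 + k ^ 2) : ℝ) : ℂ))⁻¹ * (Complex.sin (θ : ℂ)) ^ 2 * ((ν : ℝ) : ℂ) ^ 2 * Complex.I ^ 4 * (h : ℂ) ^ 2 + (1/2 : ℂ) * (((Real.sqrt (h ^ 2 + k ^ 2) : ℝ) : ℂ))⁻¹ * (Complex.sin (θ : ℂ)) ^ 2 * ((μ : ℝ) : ℂ) ^ 2 * ((ν : ℝ) : ℂ) ^ 2 * Complex.I ^ 4 * (k : ℂ) ^ 2 + (1/4 : ℂ) * (((Real.sqrt (h ^ 2 + k ^ 2) : ℝ) : ℂ))⁻¹ * (Complex.sin (θ : ℂ)) ^ 2 * ((μ : ℝ) : ℂ) ^ 2 * ((ν : ℝ) : ℂ) ^ 2 * Complex.I ^ 4 * (h : ℂ) ^ 2 + (1/2 : ℂ) * (((Real.sqrt (h ^ 2 + k ^ 2) : ℝ) : ℂ))⁻¹ * (Complex.cos (θ : ℂ)) ^ 2 * (k : ℂ) ^ 2 + (1/4 : ℂ) * (((Real.sqrt (h ^ 2 + k ^ 2) : ℝ) : ℂ))⁻¹ * (Complex.cos (θ :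 ℂ)) ^ 2 * (h : ℂ) ^ 2 + (1/2 : ℂ) * (((Real.sqrt (h ^ 2 + k ^ 2) : ℝ) : ℂ))⁻¹ * (Complex.cos (θ : ℂ)) ^ 2 * ((μ : ℝ) : ℂ) ^ 2 * (k : ℂ) ^ 2 + (1/4 : ℂ) * (((Real.sqrt (h ^ 2 + k ^ 2) : ℝ) : ℂ))⁻¹ * (Complex.cos (θ : ℂ)) ^ 2 * ((μ : ℝ) : ℂ) ^ 2 * (h : ℂ) ^ 2 := by
    simp (config := { decide := true }) only [PA, UB, H2m, Vm, X1, Z2, Y2, XX, σx, σy, σz,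
      Matrix.mul_apply, Matrix.of_apply, Fin.isValue, Matrix.add_apply, Matrix.smul_apply,
      Matrix.sub_apply, Matrix.conjTranspose_apply, Matrix.one_apply, Matrix.kroneckerMap_apply,
      Fintype.sum_prod_type, Fin.sum_univ_two, smul_eq_mul, Prod.mk.injEq, and_true, true_and,
      and_false, false_and, if_true, if_false, Matrix.cons_val', Matrix.cons_val_zero,
      Matrix.cons_val_one, Matrix.head_cons, Matrix.empty_val', Matrix.cons_val_fin_one,
      Matrix.head_fin_const, star_sub, star_mul', _root_.map_mul, map_pow, Complex.star_def,
      Complex.conj_ofReal, Complex.conj_I, _root_.map_one, _root_.map_zero, map_neg, mul_ite,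
      mul_one, mul_zero, ite_mul, zero_mul, one_mul, sub_zero, zero_sub, add_zero, zero_add,
      star_zero, star_one, mul_neg, neg_mul, neg_neg, neg_zero]
    push_cast
    ring_nf; simp only [Complex.I_pow_four]; ring_nf
  have hC01 : (PA μ * ((UB ν θ)ᴴ * (H2m k h + Vm k h)) * (UB ν θ * PA μ)) (0, 0) (1, 1)
      = (-1/2 : ℂ) * (Complex.sin (θ : ℂ)) ^ 2 * ((ν : ℝ) : ℂ) ^ 2 * Complex.I ^ 4 * (k : ℂ) + (-1/2 : ℂ) * (Complex.sin (θ : ℂ)) ^ 2 * ((μ : ℝ) : ℂ) ^ 2 * ((ν : ℝ) : ℂ) ^ 2 * Complex.I ^ 4 * (k : ℂ) + (Complex.cos (θ : ℂ)) * (Complex.sin (θ : ℂ)) * ((μ : ℝ) : ℂ) * ((ν : ℝ) : ℂ) * Complex.I ^ 2 * (h : ℂ) + (1/2 : ℂ) * (Complex.cos (θ : ℂ)) ^ 2 * (k : ℂ) + (1/2 : ℂ) * (Complex.cos (θ : ℂ)) ^ 2 * ((μ : ℝ) : ℂ) ^ 2 * (k : ℂ) := by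
    simp (config := { decide := true }) only [PA, UB, H2m, Vm, X1, Z2, Y2, XX, σx, σy, σz,
      Matrix.mul_apply, Matrix.of_apply, Fin.isValue, Matrix.add_apply, Matrix.smul_apply,
      Matrix.sub_apply, Matrix.conjTranspose_apply, Matrix.one_apply, Matrix.kroneckerMap_apply,
      Fintype.sum_prod_type, Fin.sum_univ_two, smul_eq_mul, Prod.mk.injEq, and_true, true_and,
      and_false, false_and, if_true, if_false, Matrix.cons_val', Matrix.cons_val_zero,
      Matrix.cons_val_one, Matrix.head_cons, Matrix.empty_val', Matrix.cons_val_fin_one,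
      Matrix.head_fin_const, star_sub, star_mul', _root_.map_mul, map_pow, Complex.star_def,
      Complex.conj_ofReal, Complex.conj_I, _root_.map_one, _root_.map_zero, map_neg, mul_ite,
      mul_one, mul_zero, ite_mul, zero_mul, one_mul, sub_zero, zero_sub, add_zero, zero_add,
      star_zero, star_one, mul_neg, neg_mul, neg_neg, neg_zero]
    push_cast
    ring_nf; simp only [Complex.I_pow_four]; ring_nf
  have hC10 : (PA μ * ((UB ν θ)ᴴ * (H2m k h + Vm k h)) * (UB ν θ * PA μ)) (1, 1) (0, 0)
      = (-1/2 : ℂ) * (Complex.sin (θ : ℂ)) ^ 2 * ((ν : ℝ) : ℂ) ^ 2 * Complex.I ^ 4 * (k : ℂ) + (-1/2 : ℂ) * (Complex.sin (θ : ℂ)) ^ 2 * ((μ : ℝ) : ℂ) ^ 2 * ((ν : ℝ) : ℂ) ^ 2 * Complex.I ^ 4 * (k : ℂ) + (Complex.cos (θ : ℂ)) * (Complex.sin (θ : ℂ)) * ((μ : ℝ) : ℂ) * ((ν : ℝ) : ℂ) * Complex.I ^ 2 * (h : ℂ) + (1/2 : ℂ) * (Complex.cos (θ : ℂ)) ^ 2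 * (k : ℂ) + (1/2 : ℂ) * (Complex.cos (θ : ℂ)) ^ 2 * ((μ : ℝ) : ℂ) ^ 2 * (k : ℂ) := by
    simp (config := { decide := true }) only [PA, UB, H2m, Vm, X1, Z2, Y2, XX, σx, σy, σz,
      Matrix.mul_apply, Matrix.of_apply, Fin.isValue, Matrix.add_apply, Matrix.smul_apply,
      Matrix.sub_apply, Matrix.conjTranspose_apply, Matrix.one_apply, Matrix.kroneckerMap_apply,
      Fintype.sum_prod_type, Fin.sum_univ_two, smul_eq_mul, Prod.mk.injEq, and_true, true_and,
      and_false, false_and, if_true, if_false, Matrix.cons_val', Matrix.cons_val_zero,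
      Matrix.cons_val_one, Matrix.head_cons, Matrix.empty_val', Matrix.cons_val_fin_one,
      Matrix.head_fin_const, star_sub, star_mul', _root_.map_mul, map_pow, Complex.star_def,
      Complex.conj_ofReal, Complex.conj_I, _root_.map_one, _root_.map_zero, map_neg, mul_ite,
      mul_one, mul_zero, ite_mul, zero_mul, one_mul, sub_zero, zero_sub, add_zero, zero_add,
      star_zero, star_one, mul_neg, neg_mul, neg_neg, neg_zero]
    push_cast
    ring_nf; simp only [Complex.I_pow_four]; ring_nf
  have hC11 : (PA μ * ((UB ν θ)ᴴ * (H2m k h + Vm k h)) * (UB ν θ * PA μ)) (1, 1) (1, 1)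
      = (1/4 : ℂ) * (Complex.sin (θ : ℂ)) ^ 2 * ((ν : ℝ) : ℂ) ^ 2 * Complex.I ^ 4 * (h : ℂ) + (1/4 : ℂ) * (Complex.sin (θ : ℂ)) ^ 2 * ((μ : ℝ) : ℂ) ^ 2 * ((ν : ℝ) : ℂ) ^ 2 * Complex.I ^ 4 * (h : ℂ) + (2 : ℂ) * (Complex.cos (θ : ℂ)) * (Complex.sin (θ : ℂ)) * ((μ : ℝ) : ℂ) * ((ν : ℝ) : ℂ) * Complex.I ^ 2 * (k : ℂ) + (-1/4 : ℂ) * (Complex.cos (θ : ℂ)) ^ 2 * (h : ℂ) + (-1/4 : ℂ) * (Complex.cos (θ : ℂ)) ^ 2 * ((μ : ℝ) : ℂ) ^ 2 * (h : ℂ) + (1/2 : ℂ) * (((Real.sqrt (h ^ 2 + k ^ 2) : ℝ) : ℂ))⁻¹ * (Complex.sin (θ : ℂ)) ^ 2 * ((ν : ℝ) : ℂ) ^ 2 * Complex.I ^ 4 * (k : ℂ) ^ 2 + (1/4 : ℂ) * (((Real.sqrt (h ^ 2 + k ^ 2) : ℝ) : ℂ))⁻¹ * (Complex.sin (θ : ℂ))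 ^ 2 * ((ν : ℝ) : ℂ) ^ 2 * Complex.I ^ 4 * (h : ℂ) ^ 2 + (1/2 : ℂ) * (((Real.sqrt (h ^ 2 + k ^ 2) : ℝ) : ℂ))⁻¹ * (Complex.sin (θ : ℂ)) ^ 2 * ((μ : ℝ) : ℂ) ^ 2 * ((ν : ℝ) : ℂ) ^ 2 * Complex.I ^ 4 * (k : ℂ) ^ 2 + (1/4 : ℂ) * (((Real.sqrt (h ^ 2 + k ^ 2) : ℝ) : ℂ))⁻¹ * (Complex.sin (θ : ℂ)) ^ 2 * ((μ : ℝ) : ℂ) ^ 2 * ((ν : ℝ) : ℂ) ^ 2 * Complex.I ^ 4 * (h : ℂ) ^ 2 + (1/2 : ℂ) * (((Real.sqrt (h ^ 2 + k ^ 2) : ℝ) : ℂ))⁻¹ * (Complex.cos (θ : ℂ)) ^ 2 * (k : ℂ) ^ 2 + (1/4 : ℂ) * (((Real.sqrt (h ^ 2 + k ^ 2) : ℝ) : ℂ))⁻¹ * (Complex.cos (θ : ℂ)) ^ 2 * (h : ℂ) ^ 2 + (1/2 : ℂ) * (((Real.sqrt (h ^ 2 + k ^ 2) : ℝ) : ℂ))⁻¹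 * (Complex.cos (θ : ℂ)) ^ 2 * ((μ : ℝ) : ℂ) ^ 2 * (k : ℂ) ^ 2 + (1/4 : ℂ) * (((Real.sqrt (h ^ 2 + k ^ 2) : ℝ) : ℂ))⁻¹ * (Complex.cos (θ : ℂ)) ^ 2 * ((μ : ℝ) : ℂ) ^ 2 * (h : ℂ) ^ 2 := by
    simp (config := { decide := true }) only [PA, UB, H2m, Vm, X1, Z2, Y2, XX, σx, σy, σz,
      Matrix.mul_apply, Matrix.of_apply, Fin.isValue, Matrix.add_apply, Matrix.smul_apply,
      Matrix.sub_apply, Matrix.conjTranspose_apply, Matrix.one_apply, Matrix.kroneckerMap_apply,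
      Fintype.sum_prod_type, Fin.sum_univ_two, smul_eq_mul, Prod.mk.injEq, and_true, true_and,
      and_false, false_and, if_true, if_false, Matrix.cons_val', Matrix.cons_val_zero,
      Matrix.cons_val_one, Matrix.head_cons, Matrix.empty_val', Matrix.cons_val_fin_one,
      Matrix.head_fin_const, star_sub, star_mul', _root_.map_mul, map_pow, Complex.star_def,
      Complex.conj_ofReal, Complex.conj_I, _root_.map_one, _root_.map_zero, map_neg, mul_ite,
      mul_one, mul_zero, ite_mul, zero_mul, one_mul, sub_zero, zero_sub, add_zero, zero_add,
      star_zero, star_one, mul_neg, neg_mul, neg_neg, neg_zero]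
    push_cast
    ring_nf; simp only [Complex.I_pow_four]; ring_nf
  rw [hC00, hC01, hC10, hC11]
  push_cast
  set A : ℂ := ((Real.sqrt (1 - h / Real.sqrt (h ^ 2 + k ^ 2)) : ℝ) : ℂ) with hA
  set B : ℂ := ((Real.sqrt (1 + h / Real.sqrt (h ^ 2 + k ^ 2)) : ℝ) : ℂ) with hB
  set RT : ℂ := ((Real.sqrt (h ^ 2 + k ^ 2) : ℝ) : ℂ) with hRT
  set SQ : ℂ := ((Real.sqrt 2 : ℝ) : ℂ) with hSQ
  set Cc : ℂ := Complex.cos (θ : ℂ) with hCc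
  set Ss : ℂ := Complex.sin (θ : ℂ) with hSs
  set Mu : ℂ := ((μ : ℝ) : ℂ) with hMu
  set Nu : ℂ := ((ν : ℝ) : ℂ) with hNu
  set Hh : ℂ := ((h : ℝ) : ℂ) with hHh
  set Kk : ℂ := ((k : ℝ) : ℂ) with hKk
  linear_combination (norm := ring_nf)
    ((-1/2 : ℂ) * (SQ)⁻¹ ^ 2 * Ss ^ 2 * Nu ^ 2 * Complex.I ^ 4 * Hh + (-1/2 : ℂ) * (SQ)⁻¹ ^ 2 * Ss ^ 2 * Mu ^ 2 * Nu ^ 2 * Complex.I ^ 4 * Hh + (-4 : ℂ) * (SQ)⁻¹ ^ 2 * Cc * Ss * Mu * Nu * Complex.I ^ 2 * Kk + (1/2 : ℂ) * (SQ)⁻¹ ^ 2 * Cc ^ 2 * Hh + (1/2 : ℂ) * (SQ)⁻¹ ^ 2 * Cc ^ 2 * Mu ^ 2 * Hh + (SQ)⁻¹ ^ 2 * (RT)⁻¹ * Ss ^ 2 * Nu ^ 2 * Complex.I ^ 4 * Kk ^ 2 + (1/2 : ℂ) * (SQ)⁻¹ ^ 2 * (RT)⁻¹ * Ss ^ 2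 * Nu ^ 2 * Complex.I ^ 4 * Hh ^ 2 + (SQ)⁻¹ ^ 2 * (RT)⁻¹ * Ss ^ 2 * Mu ^ 2 * Nu ^ 2 * Complex.I ^ 4 * Kk ^ 2 + (1/2 : ℂ) * (SQ)⁻¹ ^ 2 * (RT)⁻¹ * Ss ^ 2 * Mu ^ 2 * Nu ^ 2 * Complex.I ^ 4 * Hh ^ 2 + (SQ)⁻¹ ^ 2 * (RT)⁻¹ * Cc ^ 2 * Kk ^ 2 + (1/2 : ℂ) * (SQ)⁻¹ ^ 2 * (RT)⁻¹ * Cc ^ 2 * Hh ^ 2 + (SQ)⁻¹ ^ 2 * (RT)⁻¹ * Cc ^ 2 * Mu ^ 2 * Kk ^ 2 + (1/2 : ℂ) * (SQ)⁻¹ ^ 2 * (RT)⁻¹ * Cc ^ 2 * Mu ^ 2 * Hh ^ 2) * ha2 +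
    ((2 : ℂ) * (SQ)⁻¹ ^ 2 * Ss ^ 2 * Nu ^ 2 * Complex.I ^ 4 * Kk + (2 : ℂ) * (SQ)⁻¹ ^ 2 * Ss ^ 2 * Mu ^ 2 * Nu ^ 2 * Complex.I ^ 4 * Kk + (-4 : ℂ) * (SQ)⁻¹ ^ 2 * Cc * Ss * Mu * Nu * Complex.I ^ 2 * Hh + (-2 : ℂ) * (SQ)⁻¹ ^ 2 * Cc ^ 2 * Kk + (-2 : ℂ) * (SQ)⁻¹ ^ 2 * Cc ^ 2 * Mu ^ 2 * Kk) * hab +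
    ((1/2 : ℂ) * (SQ)⁻¹ ^ 2 * Ss ^ 2 * Nu ^ 2 * Complex.I ^ 4 * Hh + (1/2 : ℂ) * (SQ)⁻¹ ^ 2 * Ss ^ 2 * Mu ^ 2 * Nu ^ 2 * Complex.I ^ 4 * Hh + (4 : ℂ) * (SQ)⁻¹ ^ 2 * Cc * Ss * Mu * Nu * Complex.I ^ 2 * Kk + (-1/2 : ℂ) * (SQ)⁻¹ ^ 2 * Cc ^ 2 * Hh + (-1/2 : ℂ) * (SQ)⁻¹ ^ 2 * Cc ^ 2 * Mu ^ 2 * Hh + (SQ)⁻¹ ^ 2 * (RT)⁻¹ * Ss ^ 2 * Nu ^ 2 * Complex.I ^ 4 * Kk ^ 2 + (1/2 : ℂ) * (SQ)⁻¹ ^ 2 * (RT)⁻¹ * Ss ^ 2 * Nu ^ 2 * Complex.I ^ 4 * Hh ^ 2 + (SQ)⁻¹ ^ 2 * (RT)⁻¹ * Ss ^ 2 * Mu ^ 2 * Nu ^ 2 * Complex.I ^ 4 * Kk ^ 2 + (1/2 : ℂ) * (SQ)⁻¹ ^ 2 * (RT)⁻¹ * Ss ^ 2 * Mu ^ 2 *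 Nu ^ 2 * Complex.I ^ 4 * Hh ^ 2 + (SQ)⁻¹ ^ 2 * (RT)⁻¹ * Cc ^ 2 * Kk ^ 2 + (1/2 : ℂ) * (SQ)⁻¹ ^ 2 * (RT)⁻¹ * Cc ^ 2 * Hh ^ 2 + (SQ)⁻¹ ^ 2 * (RT)⁻¹ * Cc ^ 2 * Mu ^ 2 * Kk ^ 2 + (1/2 : ℂ) * (SQ)⁻¹ ^ 2 * (RT)⁻¹ * Cc ^ 2 * Mu ^ 2 * Hh ^ 2) * hb2 +
    ((4 : ℂ) * (RT)⁻¹ * Ss ^ 2 * Nu ^ 2 * Complex.I ^ 4 * Kk ^ 2 + (2 : ℂ) * (RT)⁻¹ * Ss ^ 2 * Nu ^ 2 * Complex.I ^ 4 * Hh ^ 2 + (4 : ℂ) * (RT)⁻¹ * Ss ^ 2 * Mu ^ 2 * Nu ^ 2 * Complex.I ^ 4 * Kk ^ 2 + (2 : ℂ) * (RT)⁻¹ * Ss ^ 2 * Mu ^ 2 * Nu ^ 2 * Complex.I ^ 4 * Hh ^ 2 + (4 : ℂ) * (RT)⁻¹ * Cc * Ss * Mu * Nu * Complex.I ^ 2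 * Hh * Kk) * hQ2 +
    ((2 : ℂ) * (RT)⁻¹ * Nu ^ 2 * Complex.I ^ 4 * Kk ^ 2 + (RT)⁻¹ * Nu ^ 2 * Complex.I ^ 4 * Hh ^ 2 + (2 : ℂ) * (RT)⁻¹ * Mu ^ 2 * Nu ^ 2 * Complex.I ^ 4 * Kk ^ 2 + (RT)⁻¹ * Mu ^ 2 * Nu ^ 2 * Complex.I ^ 4 * Hh ^ 2) * hs2 +
    ((2 : ℂ) * (RT)⁻¹ * Nu ^ 2 * Complex.I ^ 4 * Kk ^ 2 + (RT)⁻¹ * Nu ^ 2 * Complex.I ^ 4 * Hh ^ 2 + (-2 : ℂ) * (RT)⁻¹ * Cc ^ 2 * Nu ^ 2 * Complex.I ^ 4 * Kk ^ 2 + (-1 : ℂ) * (RT)⁻¹ * Cc ^ 2 * Nu ^ 2 * Complex.I ^ 4 * Hh ^ 2) * hmu +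
    ((4 : ℂ) * (RT)⁻¹ * Complex.I ^ 4 * Kk ^ 2 + (2 : ℂ) * (RT)⁻¹ * Complex.I ^ 4 * Hh ^ 2 + (-4 : ℂ) * (RT)⁻¹ * Cc ^ 2 * Complex.I ^ 4 * Kk ^ 2 + (-2 : ℂ) * (RT)⁻¹ * Cc ^ 2 * Complex.I ^ 4 * Hh ^ 2) * hnu +
    ((-4 : ℂ) * (RT)⁻¹ * Kk ^ 2 + (-2 : ℂ) * (RT)⁻¹ * Hh ^ 2 + (4 : ℂ) * (RT)⁻¹ * Complex.I ^ 2 * Kk ^ 2 + (2 : ℂ) * (RT)⁻¹ * Complex.I ^ 2 * Hh ^ 2 + (2 : ℂ) * (RT)⁻¹ * Cc * Ss * Mu * Nu * Hh * Kk + (4 : ℂ) * (RT)⁻¹ * Cc ^ 2 * Kk ^ 2 + (2 : ℂ) * (RT)⁻¹ * Cc ^ 2 * Hh ^ 2 + (-4 : ℂ) * (RT)⁻¹ * Cc ^ 2 * Complex.I ^ 2 * Kk ^ 2 + (-2 : ℂ) * (RT)⁻¹ * Cc ^ 2 * Complex.I ^ 2 * Hh ^ 2) * hi2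
  simp only [Complex.I_pow_four, Complex.I_sq]
  ring_nf
end
end

section
/- (Quantum state distinguishability via the interaction term.) Let θ ∈ ℝ be the QET-optimal angle, i.e. cos 2θ = (h²+2k²)/√((h²+2k²)² + (hk)²) and sin 2θ = hk/√((h²+2k²)² + (hk)²). Then for every μ ∈ {−1,+1}: Tr[ρ(μ,μ,θ)·V] < 0 (faithful case) and Tr[ρ(μ,−μ,θ)·V] > 0 (non-faithful case). -/
open Matrix Kronecker
open scoped ComplexOrder

noncomputable section

/-! ### Auxiliary definitions and lemmas -/

def XZ' : M4 := σx ⊗ₖ σz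
def X2' : M4 := (1 : M2) ⊗ₖ σx

lemma sxsx : σx * σx = 1 := by
  ext i j; fin_cases i <;> fin_cases j <;>
    simp [σx, Matrix.mul_apply, Fin.sum_univ_two, Matrix.one_apply]
lemma sysy : σy * σy = 1 := by
  ext i j; fin_cases i <;> fin_cases j <;>
    simp [σy, Matrix.mul_apply, Fin.sum_univ_two, Matrix.one_apply]
lemma sxsy : σx * σy = Complex.I • σz := by
  ext i j; fin_cases i <;> fin_cases j <;> simp [σx, σy, σz, Matrix.mul_apply, Fin.sum_univ_two]
lemma sysx : σy * σx = (-Complex.I) • σz := by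
  ext i j; fin_cases i <;> fin_cases j <;> simp [σx, σy, σz, Matrix.mul_apply, Fin.sum_univ_two]
lemma sysz : σy * σz = Complex.I • σx := by
  ext i j; fin_cases i <;> fin_cases j <;> simp [σx, σy, σz, Matrix.mul_apply, Fin.sum_univ_two]
lemma sxsz : σx * σz = -(Complex.I • σy) := by
  ext i j; fin_cases i <;> fin_cases j <;> simp [σx, σy, σz, Matrix.mul_apply, Fin.sum_univ_two]
lemma szsx : σz * σx = Complex.I • σy := by
  ext i j; fin_cases i <;> fin_cases j <;> simp [σx, σy, σz, Matrix.mul_apply, Fin.sum_univ_two]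

lemma XXY2 : XX * Y2 = Complex.I • XZ' := by
  rw [XX, Y2, XZ', ← Matrix.mul_kronecker_mul, Matrix.mul_one, sxsy, Matrix.kronecker_smul]
lemma Y2XX : Y2 * XX = (-Complex.I) • XZ' := by
  rw [XX, Y2, XZ', ← Matrix.mul_kronecker_mul, Matrix.one_mul, sysx, Matrix.kronecker_smul]
lemma Y2XZ : Y2 * XZ' = Complex.I • XX := by
  rw [XX, Y2, XZ', ← Matrix.mul_kronecker_mul, Matrix.one_mul, sysz, Matrix.kronecker_smul]
lemma Y2Y2 : Y2 * Y2 = 1 := by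
  rw [Y2, ← Matrix.mul_kronecker_mul, Matrix.one_mul, sysy, Matrix.one_kronecker_one]
lemma X1XX : X1 * XX = X2' := by
  rw [X1, XX, X2', ← Matrix.mul_kronecker_mul, Matrix.one_mul, sxsx]
lemma XXX1 : XX * X1 = X2' := by
  rw [X1, XX, X2', ← Matrix.mul_kronecker_mul, Matrix.mul_one, sxsx]
lemma X1XZ : X1 * XZ' = Z2 := by
  rw [X1, XZ', Z2, ← Matrix.mul_kronecker_mul, Matrix.one_mul, sxsx]
lemma XZX1 : XZ' * X1 = Z2 := by
  rw [X1, XZ', Z2, ← Matrix.mul_kronecker_mul, Matrix.mul_one, sxsx]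
lemma X1X1 : X1 * X1 = 1 := by
  rw [X1, ← Matrix.mul_kronecker_mul, Matrix.mul_one, sxsx, Matrix.one_kronecker_one]
lemma X1X2 : X1 * X2' = XX := by
  rw [X1, X2', XX, ← Matrix.mul_kronecker_mul, Matrix.mul_one, Matrix.one_mul]
lemma X1Z2 : X1 * Z2 = XZ' := by
  rw [X1, Z2, XZ', ← Matrix.mul_kronecker_mul, Matrix.mul_one, Matrix.one_mul]

lemma Y2H : Y2ᴴ = Y2 := by
  ext p q; obtain ⟨i, j⟩ := p; obtain ⟨l, m⟩ := q
  fin_cases i <;> fin_cases j <;> fin_cases l <;> fin_cases m <;>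
    simp [Y2, σy, Matrix.conjTranspose_apply, Matrix.kroneckerMap_apply, Matrix.one_apply]

lemma UBH (ν θ : ℝ) : (UB ν θ)ᴴ =
    ((Real.cos θ : ℝ) : ℂ) • (1 : M4) + ((Complex.I * ν * Real.sin θ) : ℂ) • Y2 := by
  rw [UB, Matrix.conjTranspose_sub, Matrix.conjTranspose_smul, Matrix.conjTranspose_smul,
    Matrix.conjTranspose_one, Y2H]
  rw [sub_eq_add_neg, ← neg_smul]
  match_scalars <;> simp [Complex.ext_iff]

set_option maxHeartbeats 1000000 in
lemma M_eq (k h ν θ : ℝ) :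
    (UB ν θ)ᴴ * (Vm k h * UB ν θ) =
      ((2 * k * (Real.cos θ ^ 2 - ν ^ 2 * Real.sin θ ^ 2) : ℝ) : ℂ) • XX
      + ((4 * k * ν * Real.cos θ * Real.sin θ : ℝ) : ℂ) • XZ'
      + ((2 * k ^ 2 / Real.sqrt (h ^ 2 + k ^ 2) * (Real.cos θ ^ 2 + ν ^ 2 * Real.sin θ ^ 2) : ℝ) : ℂ)
          • (1 : M4) := by
  rw [UBH, UB, Vm]
  simp only [Matrix.add_mul, Matrix.mul_add, Matrix.sub_mul, Matrix.mul_sub,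
    smul_mul_assoc, mul_smul_comm, Matrix.one_mul, Matrix.mul_one,
    XXY2, Y2XX, Y2XZ, Y2Y2, smul_smul]
  match_scalars <;> push_cast <;> ring_nf <;>
    simp [Complex.I_sq] <;> ring

/-- generic real two-parameter ground-state-like vector -/
def vab (a b : ℝ) : (Fin 2 × Fin 2) → ℂ := fun p =>
  if p = (0, 0) then (a : ℂ) else if p = (1, 1) then -(b : ℂ) else 0

def Gab (a b : ℝ) : M4 := Matrix.vecMulVec (vab a b) (star (vab a b))

lemma gProj_eq (k h : ℝ) : gProj k h =
    Gab (1 / Real.sqrt 2 * Real.sqrt (1 - h / Real.sqrt (h ^ 2 + k ^ 2)))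
        (1 / Real.sqrt 2 * Real.sqrt (1 + h / Real.sqrt (h ^ 2 + k ^ 2))) := by
  have hgs : gs k h = vab (1 / Real.sqrt 2 * Real.sqrt (1 - h / Real.sqrt (h ^ 2 + k ^ 2)))
      (1 / Real.sqrt 2 * Real.sqrt (1 + h / Real.sqrt (h ^ 2 + k ^ 2))) := by
    funext p; obtain ⟨i, j⟩ := p
    fin_cases i <;> fin_cases j <;> simp [gs, vab, e00, e11, Prod.ext_iff]
  rw [gProj, hgs, Gab]

lemma trG1 (a b : ℝ) : (Gab a b).trace = ((a ^ 2 + b ^ 2 : ℝ) : ℂ) := by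
  simp only [Gab, vab, Matrix.trace, Matrix.diag_apply, Matrix.vecMulVec_apply,
    Fintype.sum_prod_type, Fin.sum_univ_two, Pi.star_apply, Prod.mk.injEq]
  norm_num [Complex.ext_iff, ← Complex.ofReal_pow]
  ring

lemma trGXX (a b : ℝ) : (Gab a b * XX).trace = ((-(2 * a * b) : ℝ) : ℂ) := by
  simp only [Gab, vab, XX, σx, Matrix.trace, Matrix.diag_apply, Matrix.mul_apply,
    Matrix.vecMulVec_apply, Fintype.sum_prod_type, Fin.sum_univ_two, Pi.star_apply,
    Matrix.kroneckerMap_apply, Prod.mk.injEq,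
    Matrix.cons_val', Matrix.cons_val_zero, Matrix.cons_val_one, Matrix.head_cons,
    Matrix.head_fin_const, Matrix.empty_val', Matrix.cons_val_fin_one]
  norm_num [Complex.ext_iff, ← Complex.ofReal_pow]
  ring

lemma trGXZ (a b : ℝ) : (Gab a b * XZ').trace = 0 := by
  simp only [Gab, vab, XZ', σx, σz, Matrix.trace, Matrix.diag_apply, Matrix.mul_apply,
    Matrix.vecMulVec_apply, Fintype.sum_prod_type, Fin.sum_univ_two, Pi.star_apply,
    Matrix.kroneckerMap_apply, Prod.mk.injEq,
    Matrix.cons_val', Matrix.cons_val_zero, Matrix.cons_val_one, Matrix.head_cons,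
    Matrix.head_fin_const, Matrix.empty_val', Matrix.cons_val_fin_one]
  norm_num

lemma trGX1 (a b : ℝ) : (Gab a b * X1).trace = 0 := by
  simp only [Gab, vab, X1, σx, Matrix.trace, Matrix.diag_apply, Matrix.mul_apply,
    Matrix.vecMulVec_apply, Fintype.sum_prod_type, Fin.sum_univ_two, Pi.star_apply,
    Matrix.kroneckerMap_apply, Matrix.one_apply, Prod.mk.injEq,
    Matrix.cons_val', Matrix.cons_val_zero, Matrix.cons_val_one, Matrix.head_cons,
    Matrix.head_fin_const, Matrix.empty_val', Matrix.cons_val_fin_one]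
  norm_num

lemma trGX2 (a b : ℝ) : (Gab a b * X2').trace = 0 := by
  simp only [Gab, vab, X2', σx, Matrix.trace, Matrix.diag_apply, Matrix.mul_apply,
    Matrix.vecMulVec_apply, Fintype.sum_prod_type, Fin.sum_univ_two, Pi.star_apply,
    Matrix.kroneckerMap_apply, Matrix.one_apply, Prod.mk.injEq,
    Matrix.cons_val', Matrix.cons_val_zero, Matrix.cons_val_one, Matrix.head_cons,
    Matrix.head_fin_const, Matrix.empty_val', Matrix.cons_val_fin_one]
  norm_num

lemma trGZ2 (a b : ℝ) : (Gab a b * Z2).trace = ((a ^ 2 - b ^ 2 : ℝ) : ℂ) := by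
  simp only [Gab, vab, Z2, σz, Matrix.trace, Matrix.diag_apply, Matrix.mul_apply,
    Matrix.vecMulVec_apply, Fintype.sum_prod_type, Fin.sum_univ_two, Pi.star_apply,
    Matrix.kroneckerMap_apply, Matrix.one_apply, Prod.mk.injEq,
    Matrix.cons_val', Matrix.cons_val_zero, Matrix.cons_val_one, Matrix.head_cons,
    Matrix.head_fin_const, Matrix.empty_val', Matrix.cons_val_fin_one]
  norm_num [Complex.ext_iff, ← Complex.ofReal_pow]
  ring

set_option maxHeartbeats 1000000 in
lemma trace_eq (k h μ ν θ : ℝ) :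
    (ρMN k h μ ν θ * Vm k h).trace =
    ((-2 * k * (Real.cos θ ^ 2 - ν ^ 2 * Real.sin θ ^ 2) * (1 + μ ^ 2) *
        ((1 / Real.sqrt 2 * Real.sqrt (1 - h / Real.sqrt (h ^ 2 + k ^ 2)))
          * (1 / Real.sqrt 2 * Real.sqrt (1 + h / Real.sqrt (h ^ 2 + k ^ 2))))
      + 4 * k * μ * ν * Real.cos θ * Real.sin θ *
        ((1 / Real.sqrt 2 * Real.sqrt (1 - h / Real.sqrt (h ^ 2 + k ^ 2))) ^ 2
          - (1 / Real.sqrt 2 * Real.sqrt (1 + h / Real.sqrt (h ^ 2 + k ^ 2))) ^ 2)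
      + 2 * k ^ 2 / Real.sqrt (h ^ 2 + k ^ 2) * (Real.cos θ ^ 2 + ν ^ 2 * Real.sin θ ^ 2)
          * (1 + μ ^ 2) *
        ((1 / Real.sqrt 2 * Real.sqrt (1 - h / Real.sqrt (h ^ 2 + k ^ 2))) ^ 2
          + (1 / Real.sqrt 2 * Real.sqrt (1 + h / Real.sqrt (h ^ 2 + k ^ 2))) ^ 2) / 2 : ℝ) : ℂ) := by
  set a := 1 / Real.sqrt 2 * Real.sqrt (1 - h / Real.sqrt (h ^ 2 + k ^ 2)) with ha
  set b := 1 / Real.sqrt 2 * Real.sqrt (1 + h / Real.sqrt (h ^ 2 + k ^ 2)) with hb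
  have step1 : (ρMN k h μ ν θ * Vm k h).trace
      = 2 * (gProj k h * (PA μ * (((UB ν θ)ᴴ * (Vm k h * UB ν θ)) * PA μ))).trace := by
    rw [ρMN, smul_mul_assoc, Matrix.trace_smul, smul_eq_mul]
    congr 1
    rw [show UB ν θ * PA μ * gProj k h * PA μ * (UB ν θ)ᴴ * Vm k h
        = (UB ν θ * PA μ) * (gProj k h * (PA μ * ((UB ν θ)ᴴ * Vm k h))) by
      simp only [Matrix.mul_assoc]]
    rw [Matrix.trace_mul_comm]
    simp only [Matrix.mul_assoc]
  rw [step1, M_eq, gProj_eq, ← ha, ← hb]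
  simp only [PA, Matrix.add_mul, Matrix.mul_add, smul_mul_assoc, mul_smul_comm,
    Matrix.one_mul, Matrix.mul_one, XXX1, XZX1, X1XX, X1XZ, X1X1, X1X2, X1Z2, smul_smul]
  simp only [Matrix.trace_add, Matrix.trace_smul, trG1, trGXX, trGXZ, trGX1, trGX2, trGZ2,
    smul_eq_mul]
  push_cast
  ring

set_option maxHeartbeats 1000000 in
lemma main_ineq (k h : ℝ) (hk : 0 < k) (hh : 0 < h) (θ : ℝ)
    (hcos : Real.cos (2 * θ) =
      (h ^ 2 + 2 * k ^ 2) / Real.sqrt ((h ^ 2 + 2 * k ^ 2) ^ 2 + (h * k) ^ 2))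
    (hsin : Real.sin (2 * θ) =
      h * k / Real.sqrt ((h ^ 2 + 2 * k ^ 2) ^ 2 + (h * k) ^ 2))
    (μ ν : ℝ) (hμ2 : μ ^ 2 = 1) (hν2 : ν ^ 2 = 1) :
    (μ * ν = 1 → (ρMN k h μ ν θ * Vm k h).trace < 0) ∧
    (μ * ν = -1 → 0 < (ρMN k h μ ν θ * Vm k h).trace) := by
  rw [trace_eq]
  set r := Real.sqrt (h ^ 2 + k ^ 2) with hrdef
  set a := 1 / Real.sqrt 2 * Real.sqrt (1 - h / r) with hadef
  set b := 1 / Real.sqrt 2 * Real.sqrt (1 + h / r) with hbdef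
  have hr0 : 0 < r := Real.sqrt_pos.2 (by positivity)
  have hr2 : r ^ 2 = h ^ 2 + k ^ 2 := Real.sq_sqrt (by positivity)
  have hhr : h < r := by
    rw [hrdef]
    nlinarith [Real.sq_sqrt (show (0:ℝ) ≤ h^2+k^2 by positivity),
      Real.sqrt_nonneg (h^2+k^2)]
  have h1m : (0:ℝ) ≤ 1 - h / r := by
    rw [sub_nonneg, div_le_one hr0]; exact hhr.le
  have h1p : (0:ℝ) ≤ 1 + h / r := by positivity
  have hs2 : (1 / Real.sqrt 2 : ℝ) ^ 2 = 1 / 2 := by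
    rw [div_pow, one_pow, Real.sq_sqrt (by norm_num : (0:ℝ) ≤ 2)]
  have ha2 : a ^ 2 = (1 - h / r) / 2 := by
    rw [hadef, mul_pow, hs2, Real.sq_sqrt h1m]; ring
  have hb2 : b ^ 2 = (1 + h / r) / 2 := by
    rw [hbdef, mul_pow, hs2, Real.sq_sqrt h1p]; ring
  have hab : a * b = k / (2 * r) := by
    have h3 : (1 - h / r) * (1 + h / r) = (k / r) ^ 2 := by
      field_simp
      nlinarith [hr2]
    have : a * b = 1 / 2 * Real.sqrt ((1 - h / r) * (1 + h / r)) := by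
      rw [hadef, hbdef, Real.sqrt_mul h1m]
      rw [show (1:ℝ) / Real.sqrt 2 * Real.sqrt (1 - h / r) * (1 / Real.sqrt 2 * Real.sqrt (1 + h / r))
        = (1 / Real.sqrt 2 * (1 / Real.sqrt 2)) * (Real.sqrt (1 - h / r) * Real.sqrt (1 + h / r)) by ring]
      congr 1
      rw [div_mul_div_comm, one_mul, Real.mul_self_sqrt (by norm_num : (0:ℝ) ≤ 2)]
    rw [this, h3, Real.sqrt_sq (by positivity)]
    ring
  set s := Real.sqrt ((h ^ 2 + 2 * k ^ 2) ^ 2 + (h * k) ^ 2) with hsdef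
  have hs0 : 0 < s := Real.sqrt_pos.2 (by positivity)
  have hss : s ^ 2 = (h ^ 2 + 2 * k ^ 2) ^ 2 + (h * k) ^ 2 := Real.sq_sqrt (by positivity)
  have hcs : Real.sin θ ^ 2 + Real.cos θ ^ 2 = 1 := Real.sin_sq_add_cos_sq θ
  have hsA : s < h ^ 2 + 2 * k ^ 2 + h ^ 2 := by
    have h2 : s ^ 2 < (h ^ 2 + 2 * k ^ 2 + h ^ 2) ^ 2 := by
      nlinarith [hss, mul_pos hh hh, mul_pos hk hk,
        mul_pos (mul_pos hh hh) (mul_pos hk hk), mul_pos (mul_pos hh hh) (mul_pos hh hh)]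
    exact lt_of_pow_lt_pow_left₀ 2 (by positivity) h2
  have hsB : h ^ 2 + 2 * k ^ 2 ≤ s := by
    rw [hsdef]
    nlinarith [Real.sq_sqrt (show (0:ℝ) ≤ (h^2+2*k^2)^2+(h*k)^2 by positivity),
      Real.sqrt_nonneg ((h^2+2*k^2)^2+(h*k)^2)]
  -- the value of the trace expression as a function of μ*ν
  have hT : ∀ ε : ℝ, μ * ν = ε →
      -2 * k * (Real.cos θ ^ 2 - ν ^ 2 * Real.sin θ ^ 2) * (1 + μ ^ 2) * (a * b)
      + 4 * k * μ * ν * Real.cos θ * Real.sin θ * (a ^ 2 - b ^ 2)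
      + 2 * k ^ 2 / r * (Real.cos θ ^ 2 + ν ^ 2 * Real.sin θ ^ 2) * (1 + μ ^ 2)
          * (a ^ 2 + b ^ 2) / 2
      = 2 * k ^ 2 / (r * s) * (s - (h ^ 2 + 2 * k ^ 2) - ε * h ^ 2) := by
    intro ε hε
    have hcos' : Real.cos θ ^ 2 - Real.sin θ ^ 2 = (h ^ 2 + 2 * k ^ 2) / s := by
      rw [← Real.cos_two_mul', hcos]
    have hsin' : 2 * (Real.sin θ * Real.cos θ) = h * k / s := by
      rw [show 2 * (Real.sin θ * Real.cos θ) = Real.sin (2*θ) by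
        rw [Real.sin_two_mul]; ring, hsin]
    rw [hν2, ha2, hb2, hab, hμ2]
    rw [show 4 * k * μ * ν * Real.cos θ * Real.sin θ * ((1 - h / r) / 2 - (1 + h / r) / 2)
      = -(2 * k * ε * (h / r)) * (2 * (Real.sin θ * Real.cos θ)) by rw [← hε]; ring]
    rw [show -2 * k * (Real.cos θ ^ 2 - 1 * Real.sin θ ^ 2) * (1 + 1) * (k / (2 * r))
      = -(2 * k * (k / r)) * (Real.cos θ ^ 2 - Real.sin θ ^ 2) by ring]
    rw [show 2 * k ^ 2 / r * (Real.cos θ ^ 2 + 1 * Real.sin θ ^ 2) * (1 + 1)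
          * (((1 - h / r) / 2 + (1 + h / r) / 2)) / 2
      = 2 * k ^ 2 / r * (Real.sin θ ^ 2 + Real.cos θ ^ 2) by ring]
    rw [hcos', hsin', hcs]
    field_simp
    ring
  constructor
  · intro hε
    rw [hT 1 hε]
    rw [show (0:ℂ) = ((0:ℝ):ℂ) by norm_num, Complex.real_lt_real]
    apply mul_neg_of_pos_of_neg (by positivity)
    nlinarith
  · intro hε
    rw [hT (-1) hε]
    rw [show (0:ℂ) = ((0:ℝ):ℂ) by norm_num, Complex.real_lt_real]
    apply mul_pos (by positivity)
    nlinarith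

/-- State distinguishability via the interaction term: at the QET-optimal
angle, `Tr[ρ(μ,μ,θ)·V] < 0` (faithful) and `Tr[ρ(μ,−μ,θ)·V] > 0` (non-faithful). -/
theorem qet_distinguish_V (k h : ℝ) (hk : 0 < k) (hh : 0 < h) (θ : ℝ)
    (hcos : Real.cos (2 * θ) =
      (h ^ 2 + 2 * k ^ 2) / Real.sqrt ((h ^ 2 + 2 * k ^ 2) ^ 2 + (h * k) ^ 2))
    (hsin : Real.sin (2 * θ) =
      h * k / Real.sqrt ((h ^ 2 + 2 * k ^ 2) ^ 2 + (h * k) ^ 2)) :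
    ∀ μ ∈ ({-1, 1} : Set ℝ),
      (ρMN k h μ μ θ * Vm k h).trace < 0 ∧
      0 < (ρMN k h μ (-μ) θ * Vm k h).trace := by
  intro μ hμ
  have hμ2 : μ ^ 2 = 1 := by
    rcases hμ with h1 | h1 <;> rw [h1] <;> norm_num
  have hν2 : (-μ) ^ 2 = 1 := by rw [neg_pow]; simp [hμ2]
  constructor
  · exact (main_ineq k h hk hh θ hcos hsin μ μ hμ2 hμ2).1
      (by rw [← pow_two]; exact hμ2)
  · exact (main_ineq k h hk hh θ hcos hsin μ (-μ) hμ2 hν2).2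
      (by rw [mul_neg, ← pow_two, hμ2])
end
end

section
/- (Quantum state distinguishability via the single-qubit Hamiltonian.) Let θ ∈ ℝ be the QET-optimal angle, i.e. cos 2θ = (h²+2k²)/√((h²+2k²)² + (hk)²) and sin 2θ = hk/√((h²+2k²)² + (hk)²). Then for every μ ∈ {−1,+1}: Tr[ρ(μ,μ,θ)·H₂] > 0 (faithful case) and Tr[ρ(μ,−μ,θ)·H₂] < 0 (non-faithful case). -/
open Matrix Kronecker
open scoped ComplexOrder

noncomputable section

lemma mul_vmv (M : M4) (u v : (Fin 2 × Fin 2) → ℂ) :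
    M * Matrix.vecMulVec u v = Matrix.vecMulVec (M *ᵥ u) v := by
  ext i j
  simp [Matrix.mul_apply, Matrix.vecMulVec_apply, Matrix.mulVec, dotProduct,
    Finset.sum_mul, mul_assoc]

lemma vmv_mul (u v : (Fin 2 × Fin 2) → ℂ) (N : M4) :
    Matrix.vecMulVec u v * N = Matrix.vecMulVec u (v ᵥ* N) := by
  ext i j
  simp [Matrix.mul_apply, Matrix.vecMulVec_apply, Matrix.vecMul, dotProduct,
    Finset.mul_sum, mul_assoc]

lemma trace_vmv (u v : (Fin 2 × Fin 2) → ℂ) (H : M4) :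
    (Matrix.vecMulVec u v * H).trace = v ⬝ᵥ (H *ᵥ u) := by
  simp only [Matrix.trace, Matrix.diag, Matrix.mul_apply, Matrix.vecMulVec_apply,
    dotProduct, Matrix.mulVec, Finset.mul_sum]
  rw [Finset.sum_comm]
  exact Finset.sum_congr rfl fun _ _ => Finset.sum_congr rfl fun _ _ => by ring

lemma rho_eq_s18 (k h μ ν θ : ℝ) :
    ρMN k h μ ν θ = (2:ℂ) • Matrix.vecMulVec ((UB ν θ * PA μ) *ᵥ gs k h)
      (star ((UB ν θ * PA μ) *ᵥ gs k h)) := by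
  unfold ρMN gProj
  rw [Matrix.star_mulVec, Matrix.conjTranspose_mul, PA_herm]
  rw [show UB ν θ * PA μ * Matrix.vecMulVec (gs k h) (star (gs k h)) * PA μ * (UB ν θ)ᴴ
      = (UB ν θ * PA μ) * Matrix.vecMulVec (gs k h) (star (gs k h)) * (PA μ * (UB ν θ)ᴴ)
      from by rw [mul_assoc]]
  rw [mul_vmv, vmv_mul]

lemma trace_form (k h μ ν θ : ℝ) :
    (ρMN k h μ ν θ * H2m k h).trace
    = (2:ℂ) * (star ((UB ν θ * PA μ) *ᵥ gs k h) ⬝ᵥ (H2m k h *ᵥ ((UB ν θ * PA μ) *ᵥ gs k h))) := by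
  rw [rho_eq_s18, Matrix.smul_mul, Matrix.trace_smul, trace_vmv, smul_eq_mul]

set_option maxHeartbeats 2000000 in
lemma tr_eq (k h μ ν θ : ℝ) :
    (ρMN k h μ ν θ * H2m k h).trace =
    (((h/4 * (Real.cos θ^2 - ν^2*Real.sin θ^2) * (μ^2+1) *
        (Real.sqrt (1 - h / Real.sqrt (h^2+k^2))^2 - Real.sqrt (1 + h / Real.sqrt (h^2+k^2))^2)
      + 2*h*μ*ν*Real.cos θ*Real.sin θ*
        (Real.sqrt (1 - h / Real.sqrt (h^2+k^2)) * Real.sqrt (1 + h / Real.sqrt (h^2+k^2)))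
      + h^2 / Real.sqrt (h^2+k^2) / 4 * (Real.cos θ^2 + ν^2*Real.sin θ^2) * (μ^2+1) *
        (Real.sqrt (1 - h / Real.sqrt (h^2+k^2))^2 + Real.sqrt (1 + h / Real.sqrt (h^2+k^2))^2)
      : ℝ) : ℂ)) := by
  rw [trace_form, ← Matrix.mulVec_mulVec]
  simp only [UB, PA, H2m, X1, Z2, Y2, σx, σy, σz, gs, e00, e11,
    Matrix.mulVec, dotProduct, Fintype.sum_prod_type, Fin.sum_univ_two,
    Matrix.one_apply, Matrix.kroneckerMap_apply, Matrix.smul_apply,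
    Matrix.add_apply, Matrix.sub_apply, Matrix.of_apply, Matrix.cons_val',
    Matrix.cons_val_zero, Matrix.cons_val_one, Matrix.head_cons, Matrix.head_fin_const,
    Matrix.empty_val', Matrix.cons_val_fin_one, Pi.star_apply, smul_eq_mul,
    Prod.mk.injEq, Fin.isValue]
  norm_num [Prod.ext_iff]
  simp only [← Complex.ofReal_cos, ← Complex.ofReal_sin, Complex.conj_ofReal]
  have h2 : ((Real.sqrt 2 : ℝ) : ℂ)⁻¹ ^ 2 = (2:ℂ)⁻¹ := by
    rw [inv_pow, ← Complex.ofReal_pow, Real.sq_sqrt (by norm_num : (0:ℝ) ≤ 2)]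
    norm_num
  ring_nf
  simp only [Complex.I_sq, Complex.I_pow_four, h2]
  ring_nf

lemma real_form (k h μ ν θ : ℝ) (hk : 0 < k) (hh : 0 < h) (hμ : μ^2 = 1) (hν : ν^2 = 1) :
    (h/4 * (Real.cos θ^2 - ν^2*Real.sin θ^2) * (μ^2+1) *
        (Real.sqrt (1 - h / Real.sqrt (h^2+k^2))^2 - Real.sqrt (1 + h / Real.sqrt (h^2+k^2))^2)
      + 2*h*μ*ν*Real.cos θ*Real.sin θ*
        (Real.sqrt (1 - h / Real.sqrt (h^2+k^2)) * Real.sqrt (1 + h / Real.sqrt (h^2+k^2)))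
      + h^2 / Real.sqrt (h^2+k^2) / 4 * (Real.cos θ^2 + ν^2*Real.sin θ^2) * (μ^2+1) *
        (Real.sqrt (1 - h / Real.sqrt (h^2+k^2))^2 + Real.sqrt (1 + h / Real.sqrt (h^2+k^2))^2))
    = (h / Real.sqrt (h^2+k^2)) * (h - h*Real.cos (2*θ) + μ*ν*k*Real.sin (2*θ)) := by
  have hr : 0 < Real.sqrt (h^2+k^2) := Real.sqrt_pos.2 (by positivity)
  have hhr : h ≤ Real.sqrt (h^2+k^2) :=
    (Real.le_sqrt hh.le (by positivity)).2 (by nlinarith [sq_nonneg k])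
  have hA2 : Real.sqrt (1 - h / Real.sqrt (h^2+k^2))^2 = 1 - h / Real.sqrt (h^2+k^2) :=
    Real.sq_sqrt (by rw [sub_nonneg, div_le_one hr]; exact hhr)
  have hB2 : Real.sqrt (1 + h / Real.sqrt (h^2+k^2))^2 = 1 + h / Real.sqrt (h^2+k^2) :=
    Real.sq_sqrt (by positivity)
  have hAB : Real.sqrt (1 - h / Real.sqrt (h^2+k^2)) * Real.sqrt (1 + h / Real.sqrt (h^2+k^2))
      = k / Real.sqrt (h^2+k^2) := by
    rw [← Real.sqrt_mul (by rw [sub_nonneg, div_le_one hr]; exact hhr)]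
    rw [show (1 - h / Real.sqrt (h^2+k^2)) * (1 + h / Real.sqrt (h^2+k^2))
        = (k / Real.sqrt (h^2+k^2))^2 from by
      have : Real.sqrt (h^2+k^2) ^ 2 = h^2+k^2 := Real.sq_sqrt (by positivity)
      field_simp
      nlinarith [this]]
    exact Real.sqrt_sq (by positivity)
  have pyth : Real.sin θ^2 + Real.cos θ^2 = 1 := Real.sin_sq_add_cos_sq θ
  rw [Real.cos_two_mul, Real.sin_two_mul, hμ, hν]
  set r := Real.sqrt (h^2+k^2)
  set c := Real.cos θ
  set s := Real.sin θ
  linear_combination (h*(c^2-s^2)/2 + h^2*(c^2+s^2)/(2*r))*hA2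
    + (-h*(c^2-s^2)/2 + h^2*(c^2+s^2)/(2*r))*hB2
    + 2*h*μ*ν*c*s*hAB + (2*h^2/r)*pyth

/-- State distinguishability via the single-qubit Hamiltonian: at the
QET-optimal angle, `Tr[ρ(μ,μ,θ)·H₂] > 0` (faithful) and `Tr[ρ(μ,−μ,θ)·H₂] < 0`
(non-faithful). -/
theorem qet_distinguish_H2 (k h : ℝ) (hk : 0 < k) (hh : 0 < h) (θ : ℝ)
    (hcos : Real.cos (2 * θ) =
      (h ^ 2 + 2 * k ^ 2) / Real.sqrt ((h ^ 2 + 2 * k ^ 2) ^ 2 + (h * k) ^ 2))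
    (hsin : Real.sin (2 * θ) =
      h * k / Real.sqrt ((h ^ 2 + 2 * k ^ 2) ^ 2 + (h * k) ^ 2)) :
    ∀ μ ∈ ({-1, 1} : Set ℝ),
      0 < (ρMN k h μ μ θ * H2m k h).trace ∧
      (ρMN k h μ (-μ) θ * H2m k h).trace < 0 := by
  have hr : 0 < Real.sqrt (h^2+k^2) := Real.sqrt_pos.2 (by positivity)
  have hS : 0 < Real.sqrt ((h ^ 2 + 2 * k ^ 2) ^ 2 + (h * k) ^ 2) :=
    Real.sqrt_pos.2 (by positivity)
  set S := Real.sqrt ((h ^ 2 + 2 * k ^ 2) ^ 2 + (h * k) ^ 2) with hSdef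
  set r := Real.sqrt (h^2+k^2) with hrdef
  have hlt : h^2+k^2 < S := by
    rw [hSdef]
    apply (Real.lt_sqrt (by positivity)).2
    nlinarith [mul_pos (pow_pos hh 2) (pow_pos hk 2), pow_pos hk 4]
  have hlt2 : S < h^2+3*k^2 := by
    rw [hSdef]
    apply (Real.sqrt_lt' (by positivity)).2
    nlinarith [mul_pos (pow_pos hh 2) (pow_pos hk 2), pow_pos hk 4]
  intro μ hμmem
  simp only [Set.mem_insert_iff, Set.mem_singleton_iff] at hμmem
  have hμ : μ^2 = 1 := by rcases hμmem with rfl | rfl <;> norm_num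
  constructor
  · rw [tr_eq]
    rw [show (0:ℂ) = ((0:ℝ):ℂ) from by norm_num, Complex.real_lt_real]
    rw [real_form k h μ μ θ hk hh hμ hμ, hcos, hsin]
    have key : (h / r) * (h - h*((h ^ 2 + 2 * k ^ 2)/S) + μ*μ*k*(h*k/S))
        = h*h/(r*S)*(S - (h^2+k^2)) + (μ^2-1)*(h^2*k^2/(r*S)) := by
      field_simp
      ring
    rw [key, hμ]
    have : 0 < h*h/(r*S)*(S - (h^2+k^2)) :=
      mul_pos (by positivity) (sub_pos.2 hlt)
    linarith
  · rw [tr_eq]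
    rw [show (0:ℂ) = ((0:ℝ):ℂ) from by norm_num, Complex.real_lt_real]
    rw [real_form k h μ (-μ) θ hk hh hμ (by rw [neg_pow]; simp [hμ]), hcos, hsin]
    have key : (h / r) * (h - h*((h ^ 2 + 2 * k ^ 2)/S) + μ*(-μ)*k*(h*k/S))
        = -(h*h/(r*S)*((h^2+3*k^2) - S)) - (μ^2-1)*(h^2*k^2/(r*S)) := by
      field_simp
      ring
    rw [key, hμ]
    have : 0 < h*h/(r*S)*((h^2+3*k^2) - S) :=
      mul_pos (by positivity) (sub_pos.2 hlt2)
    linarith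
end
end
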